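/- arXiv:2006.09064 — 5 statements merged into one kernel-verified Lean document; each statement's English description precedes it below -/
import Mathlib

section
/- Let A be a finite set and, for each α ∈ A, let Ω_α be a nonempty standard Borel space. Let ℐ be a finite family of subsets of A, and let G be its dependency graph: the simple graph on vertex set A in which α and β are adjacent whenever α ≠ β and {α, β} ⊆ I for some I ∈ ℐ. Suppose that G is chordal and that ℐ is exactly the set of maximal cliques of G. Then every locally compatible family (p_I)_{I∈ℐ}, where each p_I is a probability measure on ∏_{α∈I} Ω_α (with the product σ-algebra), admits a global extension: there exists a probability measure p on ∏_{α∈A} Ω_α such that for every I ∈ ℐ the pushforward of p under the restriction map (ω_α)_{α∈A} ↦ (ω_α)_{α∈I} equals p_I. -/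
open MeasureTheory

/-- A simple graph is chordal if every cycle of length at least 4 has a chord: an edge of
the graph joining two vertices of the cycle that is not itself an edge of the cycle. -/
def SimpleGraph.IsChordal {V : Type*} (G : SimpleGraph V) : Prop :=
  ∀ (v : V) (w : G.Walk v v), w.IsCycle → 4 ≤ w.length →
    ∃ u₁ u₂ : V, u₁ ∈ w.support ∧ u₂ ∈ w.support ∧ G.Adj u₁ u₂ ∧ s(u₁, u₂) ∉ w.edges

/-- A maximal clique: a set of pairwise adjacent vertices not properly contained in any
other set of pairwise adjacent vertices. -/
def SimpleGraph.IsMaximalClique {V : Type*} (G : SimpleGraph V) (s : Set V) : Prop :=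
  G.IsClique s ∧ ∀ t : Set V, G.IsClique t → s ⊆ t → s = t

set_option linter.unusedSectionVars false
set_option maxHeartbeats 1000000

namespace ChordalAux

open SimpleGraph MeasureTheory ProbabilityTheory


variable {V : Type*} [DecidableEq V] {G : SimpleGraph V}

/-- Reachability via walks whose support stays in `t`. -/
def ReachIn (G : SimpleGraph V) (t : Set V) (x y : V) : Prop :=
  ∃ w : G.Walk x y, ∀ z ∈ w.support, z ∈ t

lemma ReachIn.refl {t : Set V} {x : V} (hx : x ∈ t) : ReachIn G t x x :=
  ⟨Walk.nil, by simp [hx]⟩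

lemma ReachIn.symm {t : Set V} {x y : V} (h : ReachIn G t x y) : ReachIn G t y x := by
  obtain ⟨w, hw⟩ := h
  exact ⟨w.reverse, fun z hz => hw z (by simpa [Walk.support_reverse] using hz)⟩

lemma ReachIn.trans {t : Set V} {x y z : V} (h : ReachIn G t x y) (h' : ReachIn G t y z) :
    ReachIn G t x z := by
  obtain ⟨w, hw⟩ := h
  obtain ⟨w', hw'⟩ := h'
  refine ⟨w.append w', fun u hu => ?_⟩
  rcases (Walk.mem_support_append_iff _ _).mp hu with h | h
  · exact hw u h
  · exact hw' u h

lemma ReachIn.mem_left {t : Set V} {x y : V} (h : ReachIn G t x y) : x ∈ t := by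
  obtain ⟨w, hw⟩ := h; exact hw x w.start_mem_support

lemma ReachIn.mem_right {t : Set V} {x y : V} (h : ReachIn G t x y) : y ∈ t := by
  obtain ⟨w, hw⟩ := h; exact hw y w.end_mem_support

lemma ReachIn.step {t : Set V} {x y z : V} (h : ReachIn G t x y) (hadj : G.Adj y z)
    (hz : z ∈ t) : ReachIn G t x z :=
  h.trans ⟨Walk.cons hadj Walk.nil, by simp [h.mem_right, hz]⟩

lemma reachIn_of_mem_support {t : Set V} {x y z : V} (w : G.Walk x y)
    (hw : ∀ u ∈ w.support, u ∈ t) (hz : z ∈ w.support) : ReachIn G t x z :=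
  ⟨w.takeUntil z hz, fun u hu => hw u (w.support_takeUntil_subset hz hu)⟩

lemma adj_of_length_one {x y : V} {w : G.Walk x y} (h : w.length = 1) : G.Adj x y := by
  cases w with
  | nil => simp at h
  | cons hadj p =>
    have : p.length = 0 := by simpa using h
    exact (Walk.eq_of_length_eq_zero this) ▸ hadj

lemma edge_mem_of_length_one {x y : V} {w : G.Walk x y} (h : w.length = 1) :
    s(x, y) ∈ w.edges := by
  cases w with
  | nil => simp at h
  | cons hadj p =>
    have : p.length = 0 := by simpa using h
    have he := Walk.eq_of_length_eq_zero this
    subst he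
    simp

/-- A walk with support inside `{a, b}` between distinct vertices gives an edge. -/
lemma adj_of_walk_in_pair {a b : V} (w : G.Walk a b) (hw : ∀ z ∈ w.support, z = a ∨ z = b)
    (hab : a ≠ b) : G.Adj a b := by
  cases w with
  | nil => exact absurd rfl hab
  | cons hadj p =>
    rename_i c
    have hc : c = a ∨ c = b := hw c (by simp [p.start_mem_support])
    rcases hc with rfl | rfl
    · exact absurd rfl hadj.ne'
    · exact hadj

/-- No chord shortcut on a minimal-length walk with support in `T`. -/
lemma no_shortcut {T : Set V} {x y : V} (w : G.Walk x y) (hw : ∀ z ∈ w.support, z ∈ T)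
    (hmin : ∀ w' : G.Walk x y, (∀ z ∈ w'.support, z ∈ T) → w.length ≤ w'.length)
    {u₁ u₂ : V} (h₁ : u₁ ∈ w.support) (h₂ : u₂ ∈ w.support) (hadj : G.Adj u₁ u₂)
    (hne : s(u₁, u₂) ∉ w.edges) : False := by
  classical
  set t := w.takeUntil u₁ h₁ with ht
  set d := w.dropUntil u₁ h₁ with hd
  have hspec : t.append d = w := w.take_spec h₁
  have hlen : t.length + d.length = w.length := by
    rw [← hspec, Walk.length_append]
  have hsubt : ∀ z ∈ t.support, z ∈ w.support := fun z hz => w.support_takeUntil_subset h₁ hz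
  have hsubd : ∀ z ∈ d.support, z ∈ w.support := fun z hz => w.support_dropUntil_subset h₁ hz
  have hedged : ∀ e ∈ d.edges, e ∈ w.edges := fun e he => w.edges_dropUntil_subset h₁ he
  have hedget : ∀ e ∈ t.edges, e ∈ w.edges := fun e he => w.edges_takeUntil_subset h₁ he
  have h₂' : u₂ ∈ t.support ∨ u₂ ∈ d.support := by
    rw [← hspec] at h₂
    exact (Walk.mem_support_append_iff _ _).mp h₂
  rcases h₂' with hc | hc
  · -- u₂ occurs in t (before u₁)
    set t₂ := t.takeUntil u₂ hc with ht₂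
    set m₂ := t.dropUntil u₂ hc with hm₂
    have hspec2 : t₂.append m₂ = t := t.take_spec hc
    have hlen2 : t₂.length + m₂.length = t.length := by rw [← hspec2, Walk.length_append]
    have hw' : ∀ z ∈ (t₂.append (Walk.cons hadj.symm d)).support, z ∈ T := by
      intro z hz
      rcases (Walk.mem_support_append_iff _ _).mp hz with h | h
      · exact hw z (hsubt z (t.support_takeUntil_subset hc h))
      · rcases List.mem_cons.mp (by simpa using h) with rfl | h
        · exact hw z (hsubt z hc)
        · exact hw z (hsubd z h)
    have := hmin _ hw'
    rw [Walk.length_append, Walk.length_cons] at this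
    have hm2 : m₂.length ≤ 1 := by omega
    interval_cases h : m₂.length
    · exact hadj.ne (Walk.eq_of_length_eq_zero h).symm
    · have := edge_mem_of_length_one h
      have : s(u₂, u₁) ∈ w.edges := hedget _ (t.edges_dropUntil_subset hc this)
      rw [Sym2.eq_swap] at this
      exact hne this
  · -- u₂ occurs in d (after u₁)
    set m := d.takeUntil u₂ hc with hm
    set d₂ := d.dropUntil u₂ hc with hd₂
    have hspec2 : m.append d₂ = d := d.take_spec hc
    have hlen2 : m.length + d₂.length = d.length := by rw [← hspec2, Walk.length_append]
    have hw' : ∀ z ∈ (t.append (Walk.cons hadj d₂)).support, z ∈ T := by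
      intro z hz
      rcases (Walk.mem_support_append_iff _ _).mp hz with h | h
      · exact hw z (hsubt z h)
      · rcases List.mem_cons.mp (by simpa using h) with rfl | h
        · exact hw z (hsubt z t.end_mem_support)
        · exact hw z (hsubd z (d.support_dropUntil_subset hc h))
    have := hmin _ hw'
    rw [Walk.length_append, Walk.length_cons] at this
    have hm1 : m.length ≤ 1 := by omega
    interval_cases h : m.length
    · exact hadj.ne (Walk.eq_of_length_eq_zero h)
    · have := edge_mem_of_length_one h
      exact hne (hedged _ (d.edges_takeUntil_subset hc this))


/-- `v` is simplicial within `s`: it is in `s` and its neighbors within `s` are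
pairwise adjacent. -/
def SimpAt (G : SimpleGraph V) (s : Finset V) (v : V) : Prop :=
  v ∈ s ∧ ∀ x ∈ s, ∀ y ∈ s, G.Adj v x → G.Adj v y → x ≠ y → G.Adj x y

theorem exists_simplicial [Fintype V] (G : SimpleGraph V) (hch : G.IsChordal) :
    ∀ s : Finset V, s.Nonempty →
      (∀ x ∈ s, ∀ y ∈ s, x ≠ y → G.Adj x y) ∨
      ∃ v ∈ s, ∃ w ∈ s, v ≠ w ∧ ¬ G.Adj v w ∧ SimpAt G s v ∧ SimpAt G s w := by
  classical
  intro s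
  induction s using Finset.strongInduction with
  | _ s ih =>
  intro hs
  by_cases hcomp : ∀ x ∈ s, ∀ y ∈ s, x ≠ y → G.Adj x y
  · exact Or.inl hcomp
  push_neg at hcomp
  obtain ⟨a, ha, b, hb, hab, hnadj⟩ := hcomp
  -- separators
  set cand : Finset (Finset V) :=
    s.powerset.filter (fun S => a ∉ S ∧ b ∉ S ∧ ¬ ReachIn G (↑(s \ S)) a b) with hcand
  have hcand_mem : ∀ S : Finset V,
      S ∈ cand ↔ S ⊆ s ∧ a ∉ S ∧ b ∉ S ∧ ¬ ReachIn G (↑(s \ S)) a b := by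
    intro S
    simp [hcand, Finset.mem_filter, Finset.mem_powerset, and_assoc]
  have h0 : s \ {a, b} ∈ cand := by
    rw [hcand_mem]
    refine ⟨Finset.sdiff_subset, by simp [ha], by simp [hb], ?_⟩
    rintro ⟨w, hw⟩
    refine hnadj (adj_of_walk_in_pair w ?_ hab)
    intro z hz
    have := hw z hz
    simp only [Finset.coe_sdiff, Set.mem_diff, Finset.mem_coe, Finset.mem_sdiff,
      Finset.mem_insert, Finset.mem_singleton] at this
    tauto
  obtain ⟨S, hScand, hSmin⟩ := Finset.exists_min_image cand Finset.card ⟨_, h0⟩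
  rw [hcand_mem] at hScand
  obtain ⟨hSs, haS, hbS, hSsep⟩ := hScand
  set t : Set V := ↑(s \ S) with htdef
  have hmem_t : ∀ z, z ∈ t ↔ z ∈ s ∧ z ∉ S := by
    intro z; simp [htdef]
  have hat : a ∈ t := (hmem_t a).mpr ⟨ha, haS⟩
  have hbt : b ∈ t := (hmem_t b).mpr ⟨hb, hbS⟩
  -- minimality: every separator vertex has a neighbor in each component
  have key3 : ∀ c d : V, c ∈ t → d ∈ t → ¬ ReachIn G t c d →
      (∀ S' : Finset V, S' ∈ cand ↔
        (S' ⊆ s ∧ c ∉ S' ∧ d ∉ S' ∧ ¬ ReachIn G (↑(s \ S')) c d)) →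
      ∀ x ∈ S, ∃ u, ReachIn G t c u ∧ G.Adj x u := by
    intro c d hct hdt hsep hcand' x hxS
    by_contra hno
    push_neg at hno
    have hrerase : ¬ ReachIn G (↑(s \ S.erase x)) c d := by
      rintro ⟨w, hw⟩
      have hx : x ∈ w.support := by
        by_contra hxw
        refine hsep ⟨w, fun z hz => ?_⟩
        have h1 := hw z hz
        rw [Finset.mem_coe, Finset.mem_sdiff] at h1
        rw [hmem_t]
        refine ⟨h1.1, fun hzS => h1.2 (Finset.mem_erase.mpr ⟨?_, hzS⟩)⟩
        rintro rfl; exact hxw hz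
      set P := w.takeUntil x hx with hP
      have hPsub : ∀ z ∈ P.support, z ∈ (↑(s \ S.erase x) : Set V) :=
        fun z hz => hw z (w.support_takeUntil_subset hx hz)
      have hcount : P.support.count x = 1 := w.count_support_takeUntil_eq_one hx
      have hcx : c ≠ x := by rintro rfl; exact ((hmem_t c).mp hct).2 hxS
      have hPnn : ¬ P.reverse.Nil := by
        rw [Walk.nil_iff_length_eq, Walk.length_reverse, ← Walk.nil_iff_length_eq]
        exact Walk.not_nil_of_ne hcx
      obtain ⟨u, hadj, q, hq⟩ := Walk.not_nil_iff.mp hPnn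
      have hqsub : ∀ z ∈ q.support, z ∈ P.support := by
        intro z hz
        have : z ∈ P.reverse.support := by rw [hq, Walk.support_cons]; exact List.mem_cons_of_mem _ hz
        rwa [Walk.support_reverse, List.mem_reverse] at this
      have hxq : x ∉ q.support := by
        intro hxq
        have h2 : P.reverse.support.count x = 1 := by
          rw [Walk.support_reverse, List.count_reverse]; exact hcount
        rw [hq, Walk.support_cons, List.count_cons_self] at h2
        have h3 : 0 < q.support.count x := List.count_pos_iff.mpr hxq
        omega
      have hqt : ∀ z ∈ q.support, z ∈ t := by
        intro z hz
        have h1 := hPsub z (hqsub z hz)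
        rw [Finset.mem_coe, Finset.mem_sdiff] at h1
        rw [hmem_t]
        refine ⟨h1.1, fun hzS => h1.2 (Finset.mem_erase.mpr ⟨?_, hzS⟩)⟩
        rintro rfl; exact hxq hz
      have hreach : ReachIn G t c u :=
        ⟨q.reverse, fun z hz => hqt z (by rwa [Walk.support_reverse, List.mem_reverse] at hz)⟩
      exact hno u hreach hadj
    have herase : S.erase x ∈ cand := by
      rw [hcand']
      exact ⟨(Finset.erase_subset _ _).trans hSs,
        fun h => ((hmem_t c).mp hct).2 (Finset.mem_of_mem_erase h),
        fun h => ((hmem_t d).mp hdt).2 (Finset.mem_of_mem_erase h), hrerase⟩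
    have h1 := hSmin _ herase
    have h2 : (S.erase x).card = S.card - 1 := Finset.card_erase_of_mem hxS
    have h3 : 0 < S.card := Finset.card_pos.mpr ⟨x, hxS⟩
    omega
  have hNa : ∀ x ∈ S, ∃ u, ReachIn G t a u ∧ G.Adj x u :=
    key3 a b hat hbt hSsep hcand_mem
  have hNb : ∀ x ∈ S, ∃ u, ReachIn G t b u ∧ G.Adj x u := by
    refine key3 b a hbt hat (fun h => hSsep h.symm) ?_
    intro S'
    rw [hcand_mem]
    constructor
    · rintro ⟨h1, h2, h3, h4⟩; exact ⟨h1, h3, h2, fun h => h4 h.symm⟩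
    · rintro ⟨h1, h2, h3, h4⟩; exact ⟨h1, h3, h2, fun h => h4 h.symm⟩
  -- the separator is a clique
  have hSclique : ∀ x ∈ S, ∀ y ∈ S, x ≠ y → G.Adj x y := by
    intro x hx y hy hxy
    by_contra hnxy
    obtain ⟨ux, huxa, hadjux⟩ := hNa x hx
    obtain ⟨uy, huya, hadjuy⟩ := hNa y hy
    obtain ⟨vx, hvxb, hadjvx⟩ := hNb x hx
    obtain ⟨vy, hvyb, hadjvy⟩ := hNb y hy
    set Ca : Set V := {z | ReachIn G t a z} with hCa
    set Cb : Set V := {z | ReachIn G t b z} with hCb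
    have hdisjC : ∀ z, z ∈ Ca → z ∈ Cb → False := fun z h1 h2 => hSsep (h1.trans h2.symm)
    have hxt : x ∉ t := fun h => ((hmem_t x).mp h).2 hx
    have hyt : y ∉ t := fun h => ((hmem_t y).mp h).2 hy
    have hxCa : x ∉ Ca := fun h => hxt h.mem_right
    have hyCa : y ∉ Ca := fun h => hyt h.mem_right
    have hxCb : x ∉ Cb := fun h => hxt h.mem_right
    have hyCb : y ∉ Cb := fun h => hyt h.mem_right
    set Ta : Set V := Ca ∪ {x, y} with hTa
    set Tb : Set V := Cb ∪ {x, y} with hTb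
    -- existence of a walk from x to y inside Ta
    have hwalk : ∀ (c : V) (Cc : Set V), Cc = {z | ReachIn G t c z} →
        ∀ u u' : V, u ∈ Cc → u' ∈ Cc → G.Adj x u → G.Adj y u' →
        ∃ w : G.Walk x y, ∀ z ∈ w.support, z ∈ Cc ∪ {x, y} := by
      intro c Cc hCc u u' hu hu' hxu hyu'
      rw [hCc] at hu hu'
      obtain ⟨q0, hq0⟩ := (hu.symm.trans hu' : ReachIn G t u u')
      have hq0C : ∀ z ∈ q0.support, z ∈ Cc := by
        intro z hz
        rw [hCc]
        exact hu.trans (reachIn_of_mem_support q0 hq0 hz)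
      refine ⟨Walk.cons hxu (q0.append (Walk.cons hyu'.symm Walk.nil)), ?_⟩
      intro z hz
      rw [Walk.support_cons] at hz
      rcases List.mem_cons.mp hz with rfl | hz
      · exact Or.inr (by simp)
      rcases (Walk.mem_support_append_iff _ _).mp hz with hz | hz
      · exact Or.inl (hq0C z hz)
      · rw [Walk.support_cons] at hz
        rcases List.mem_cons.mp hz with rfl | hz
        · exact Or.inl (hq0C z q0.end_mem_support)
        · rw [Walk.support_nil] at hz
          rcases List.mem_singleton.mp hz with rfl
          exact Or.inr (by simp)
    -- minimal paths
    have hminwalk : ∀ (T : Set V) (w0 : G.Walk x y), (∀ z ∈ w0.support, z ∈ T) →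
        ∃ w : G.Walk x y, w.IsPath ∧ (∀ z ∈ w.support, z ∈ T) ∧
          (∀ w' : G.Walk x y, (∀ z ∈ w'.support, z ∈ T) → w.length ≤ w'.length) := by
      intro T w0 hw0
      set L : Set ℕ := {n | ∃ w : G.Walk x y, (∀ z ∈ w.support, z ∈ T) ∧ w.length = n} with hL
      have hLne : L.Nonempty := ⟨w0.length, w0, hw0, rfl⟩
      obtain ⟨w1, hw1, hw1len⟩ : ∃ w : G.Walk x y, (∀ z ∈ w.support, z ∈ T) ∧
          w.length = sInf L := Nat.sInf_mem hLne
      refine ⟨w1.bypass, w1.bypass_isPath, fun z hz => hw1 z (w1.support_bypass_subset hz), ?_⟩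
      intro w' hw'
      calc w1.bypass.length ≤ w1.length := w1.length_bypass_le
        _ ≤ w'.length := hw1len ▸ Nat.sInf_le ⟨w', hw', rfl⟩
    obtain ⟨w0a, hw0a⟩ := hwalk a Ca rfl ux uy huxa huya hadjux hadjuy
    obtain ⟨pa, hpaP, hpaS, hpaM⟩ := hminwalk Ta w0a hw0a
    obtain ⟨w0b', hw0b'⟩ := hwalk b Cb rfl vx vy hvxb hvyb hadjvx hadjvy
    obtain ⟨pb', hpbP', hpbS', hpbM'⟩ := hminwalk Tb w0b' hw0b'
    set pb := pb'.reverse with hpbdef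
    have hpbP : pb.IsPath := hpbP'.reverse
    have hpbS : ∀ z ∈ pb.support, z ∈ Tb := by
      intro z hz; exact hpbS' z (by rwa [hpbdef, Walk.support_reverse, List.mem_reverse] at hz)
    have hpbM : ∀ w' : G.Walk y x, (∀ z ∈ w'.support, z ∈ Tb) → pb.length ≤ w'.length := by
      intro w' hw'
      rw [hpbdef, Walk.length_reverse]
      calc pb'.length ≤ w'.reverse.length := by
            refine hpbM' _ fun z hz => hw' z ?_
            rwa [Walk.support_reverse, List.mem_reverse] at hz
        _ = w'.length := Walk.length_reverse _
    -- lengths at least 2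
    have hpa2 : 2 ≤ pa.length := by
      have h0 : pa.length ≠ 0 := fun h => hxy (Walk.eq_of_length_eq_zero h)
      have h1 : pa.length ≠ 1 := fun h => hnxy (adj_of_length_one h)
      omega
    have hpb2 : 2 ≤ pb.length := by
      have h0 : pb.length ≠ 0 := fun h => hxy (Walk.eq_of_length_eq_zero h).symm
      have h1 : pb.length ≠ 1 := fun h => hnxy (adj_of_length_one h).symm
      omega
    -- endpoints of shared structure
    have hxpb : x ∈ pb.support := pb.end_mem_support
    have hypb : y ∈ pb.support := pb.start_mem_support
    have hxpa : x ∈ pa.support := pa.start_mem_support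
    have hypa : y ∈ pa.support := pa.end_mem_support
    have hTaTb : ∀ z, z ∈ Ta → z ∈ Tb → z = x ∨ z = y := by
      intro z h1 h2
      rcases h1 with h1 | h1
      · rcases h2 with h2 | h2
        · exact absurd h2 (fun h => hdisjC z h1 h)
        · simpa using h2
      · simpa using h1
    -- the cycle
    set cyc : G.Walk x x := pa.append pb with hcyc
    have hcycsup : ∀ z, z ∈ cyc.support ↔ z ∈ pa.support ∨ z ∈ pb.support := by
      intro z; rw [hcyc]; exact Walk.mem_support_append_iff _ _
    have hpa_tail : pa.support = x :: pa.support.tail := pa.support_eq_cons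
    have hpb_tail : pb.support = y :: pb.support.tail := pb.support_eq_cons
    have hpa_nodup := hpaP.support_nodup
    have hpb_nodup := hpbP.support_nodup
    have hxnta : x ∉ pa.support.tail := by
      rw [hpa_tail] at hpa_nodup; exact (List.nodup_cons.mp hpa_nodup).1
    have hyntb : y ∉ pb.support.tail := by
      rw [hpb_tail] at hpb_nodup; exact (List.nodup_cons.mp hpb_nodup).1
    have hcyc_sup_eq : cyc.support = x :: (pa.support.tail ++ pb.support.tail) := by
      rw [hcyc, Walk.support_append]
      conv_lhs => rw [hpa_tail]
      simp
      conv_lhs => rw [hpa_tail]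
      rfl
    have hcycle : cyc.IsCycle := by
      refine ⟨⟨⟨?_⟩, ?_⟩, ?_⟩
      · -- edges nodup
        rw [hcyc, Walk.edges_append]
        refine List.Nodup.append hpaP.isTrail.edges_nodup hpbP.isTrail.edges_nodup ?_
        intro e he1 he2
        induction e with
        | h c1 c2 =>
          have hc1a := Walk.fst_mem_support_of_mem_edges pa he1
          have hc2a := Walk.snd_mem_support_of_mem_edges pa he1
          have hc1b := Walk.fst_mem_support_of_mem_edges pb he2
          have hc2b := Walk.snd_mem_support_of_mem_edges pb he2
          have hadj12 := pa.adj_of_mem_edges he1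
          rcases hTaTb c1 (hpaS _ hc1a) (hpbS _ hc1b) with rfl | rfl <;>
            rcases hTaTb c2 (hpaS _ hc2a) (hpbS _ hc2b) with rfl | rfl
          · exact hadj12.ne rfl
          · exact hnxy hadj12
          · exact hnxy hadj12.symm
          · exact hadj12.ne rfl
      · -- not nil
        intro h
        have : cyc.length = 0 := by rw [h]; rfl
        rw [hcyc, Walk.length_append] at this
        omega
      · -- support tail nodup
        rw [hcyc_sup_eq]
        simp only [List.tail_cons]
        rw [List.nodup_append]
        refine ⟨?_, ?_, ?_⟩
        · rw [hpa_tail] at hpa_nodup; exact (List.nodup_cons.mp hpa_nodup).2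
        · rw [hpb_tail] at hpb_nodup; exact (List.nodup_cons.mp hpb_nodup).2
        · intro z hz1 z' hz2 hzz
          rw [← hzz] at hz2
          have hz1' : z ∈ pa.support := by rw [hpa_tail]; exact List.mem_cons_of_mem _ hz1
          have hz2' : z ∈ pb.support := by rw [hpb_tail]; exact List.mem_cons_of_mem _ hz2
          rcases hTaTb z (hpaS _ hz1') (hpbS _ hz2') with rfl | rfl
          · exact hxnta hz1
          · exact hyntb hz2
    have hlen4 : 4 ≤ cyc.length := by
      rw [hcyc, Walk.length_append]; omega
    obtain ⟨u₁, u₂, hu₁, hu₂, huadj, hune⟩ := hch x cyc hcycle hlen4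
    have hEa : ∀ e ∈ pa.edges, e ∈ cyc.edges := by
      intro e he; rw [hcyc, Walk.edges_append]; exact List.mem_append_left _ he
    have hEb : ∀ e ∈ pb.edges, e ∈ cyc.edges := by
      intro e he; rw [hcyc, Walk.edges_append]; exact List.mem_append_right _ he
    have hcross : ∀ z₁ z₂, z₁ ∈ Ca → z₂ ∈ Cb → G.Adj z₁ z₂ → False := by
      intro z₁ z₂ h1 h2 hadj
      exact hdisjC z₂ (ReachIn.step h1 hadj h2.mem_right) h2
    have hCa_of : ∀ z, z ∈ pa.support → z ∉ pb.support → z ∈ Ca := by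
      intro z h1 h2
      rcases hpaS z h1 with h | h
      · exact h
      · exfalso; rcases (by simpa using h : z = x ∨ z = y) with rfl | rfl
        · exact h2 hxpb
        · exact h2 hypb
    have hCb_of : ∀ z, z ∈ pb.support → z ∉ pa.support → z ∈ Cb := by
      intro z h1 h2
      rcases hpbS z h1 with h | h
      · exact h
      · exfalso; rcases (by simpa using h : z = x ∨ z = y) with rfl | rfl
        · exact h2 hxpa
        · exact h2 hypa
    have hSCa : u₁ ∈ pa.support → u₂ ∈ pa.support → False := fun h1 h2 =>
      no_shortcut pa hpaS hpaM h1 h2 huadj (fun h => hune (hEa _ h))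
    have hSCb : u₁ ∈ pb.support → u₂ ∈ pb.support → False := fun h1 h2 =>
      no_shortcut pb hpbS hpbM h1 h2 huadj (fun h => hune (hEb _ h))
    rcases (hcycsup u₁).mp hu₁ with h1a | h1b <;> rcases (hcycsup u₂).mp hu₂ with h2a | h2b
    · exact hSCa h1a h2a
    · by_cases h2a : u₂ ∈ pa.support
      · exact hSCa h1a h2a
      by_cases h1b : u₁ ∈ pb.support
      · exact hSCb h1b h2b
      · exact hcross u₁ u₂ (hCa_of _ h1a h1b) (hCb_of _ h2b h2a) huadj
    · by_cases h1a : u₁ ∈ pa.support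
      · exact hSCa h1a h2a
      by_cases h2b : u₂ ∈ pb.support
      · exact hSCb h1b h2b
      · exact hcross u₂ u₁ (hCa_of _ h2a h2b) (hCb_of _ h1b h1a) huadj.symm
    · exact hSCb h1b h2b
  -- extraction of a simplicial vertex in a component
  have key5 : ∀ c d : V, c ∈ t → d ∈ t → ¬ ReachIn G t c d →
      ∃ v, ReachIn G t c v ∧ SimpAt G s v := by
    intro c d hct hdt hsep
    set Cc : Set V := {z | ReachIn G t c z} with hCc
    have hCct : ∀ z, z ∈ Cc → z ∈ t := fun z hz => hz.mem_right
    have hCcs : ∀ z, z ∈ Cc → z ∈ s := fun z hz => ((hmem_t z).mp (hCct z hz)).1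
    set s' : Finset V := (s.filter (· ∈ Cc)) ∪ S with hs'
    have hmem_s' : ∀ z, z ∈ s' ↔ z ∈ Cc ∨ z ∈ S := by
      intro z
      rw [hs', Finset.mem_union, Finset.mem_filter]
      constructor
      · rintro (⟨_, h⟩ | h); exacts [Or.inl h, Or.inr h]
      · rintro (h | h); exacts [Or.inl ⟨hCcs z h, h⟩, Or.inr h]
    have hsub : s' ⊆ s := by
      intro z hz
      rcases (hmem_s' z).mp hz with h | h
      · exact hCcs z h
      · exact hSs h
    have hds' : d ∉ s' := by
      rw [hmem_s']
      rintro (h | h)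
      · exact hsep h
      · exact ((hmem_t d).mp hdt).2 h
    have hcc : c ∈ Cc := ReachIn.refl hct
    have hcs' : c ∈ s' := (hmem_s' c).mpr (Or.inl hcc)
    have hssub : s' ⊂ s := (Finset.ssubset_iff_of_subset hsub).mpr
      ⟨d, ((hmem_t d).mp hdt).1, hds'⟩
    have hnb : ∀ v, v ∈ Cc → ∀ z ∈ s, G.Adj v z → z ∈ s' := by
      intro v hv z hz hadj
      rw [hmem_s']
      by_cases hzS : z ∈ S
      · exact Or.inr hzS
      · exact Or.inl (ReachIn.step hv hadj ((hmem_t z).mpr ⟨hz, hzS⟩))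
    rcases ih s' hssub ⟨c, hcs'⟩ with hfull | ⟨v₁, hv₁, v₂, hv₂, hne12, hnadj12, hsimp₁, hsimp₂⟩
    · refine ⟨c, hcc, ((hmem_t c).mp hct).1, ?_⟩
      intro x hx y hy hcx hcy hxy
      exact hfull x (hnb c hcc x hx hcx) y (hnb c hcc y hy hcy) hxy
    · have hone : (v₁ ∈ Cc ∧ SimpAt G s' v₁) ∨ (v₂ ∈ Cc ∧ SimpAt G s' v₂) := by
        rcases (hmem_s' v₁).mp hv₁ with h1 | h1
        · exact Or.inl ⟨h1, hsimp₁⟩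
        rcases (hmem_s' v₂).mp hv₂ with h2 | h2
        · exact Or.inr ⟨h2, hsimp₂⟩
        · exact absurd (hSclique v₁ h1 v₂ h2 hne12) hnadj12
      have hfin : ∀ v, v ∈ Cc → SimpAt G s' v → ∃ v, ReachIn G t c v ∧ SimpAt G s v := by
        intro v hvC hvsimp
        refine ⟨v, hvC, hCcs v hvC, ?_⟩
        intro x hx y hy hvx hvy hxy
        exact hvsimp.2 x (hnb v hvC x hx hvx) y (hnb v hvC y hy hvy) hvx hvy hxy
      rcases hone with ⟨hvC, hvsimp⟩ | ⟨hvC, hvsimp⟩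
      · exact hfin v₁ hvC hvsimp
      · exact hfin v₂ hvC hvsimp
  obtain ⟨va, hvaC, hvaS⟩ := key5 a b hat hbt hSsep
  obtain ⟨vb, hvbC, hvbS⟩ := key5 b a hbt hat (fun h => hSsep h.symm)
  refine Or.inr ⟨va, hvaS.1, vb, hvbS.1, ?_, ?_, hvaS, hvbS⟩
  · rintro rfl
    exact hSsep (hvaC.trans hvbC.symm)
  · intro hadj
    exact hSsep ((hvaC.step hadj hvbC.mem_right).trans hvbC.symm)

/-- The dependency graph of a family of finsets. -/
def depGraph {A : Type*} (ℐ : Finset (Finset A)) : SimpleGraph A where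
  Adj α β := α ≠ β ∧ ∃ I ∈ ℐ, α ∈ I ∧ β ∈ I
  symm := ⟨by rintro α β ⟨h, I, hI, h1, h2⟩; exact ⟨h.symm, I, hI, h2, h1⟩⟩
  loopless := ⟨fun α h => h.1 rfl⟩

lemma exists_maximal_superclique {V : Type*} [Fintype V] [DecidableEq V] (G : SimpleGraph V)
    (K : Finset V) (hK : G.IsClique ↑K) : ∃ M : Finset V, G.IsMaximalClique ↑M ∧ K ⊆ M := by
  classical
  set T := Finset.univ.powerset.filter (fun t : Finset V => K ⊆ t ∧ G.IsClique ↑t) with hT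
  have hKT : K ∈ T := by
    simp only [hT, Finset.mem_filter, Finset.mem_powerset]
    exact ⟨Finset.subset_univ _, Finset.Subset.refl _, hK⟩
  obtain ⟨M, hMT, hMmax⟩ := Finset.exists_max_image T Finset.card ⟨K, hKT⟩
  rw [hT, Finset.mem_filter] at hMT
  obtain ⟨-, hKM, hMcl⟩ := hMT
  refine ⟨M, ⟨hMcl, ?_⟩, hKM⟩
  intro t ht hsub
  have htfin : t.Finite := Set.toFinite t
  set F := htfin.toFinset with hF
  have hcoeF : (↑F : Set V) = t := htfin.coe_toFinset
  have hFT : F ∈ T := by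
    rw [hT, Finset.mem_filter]
    refine ⟨Finset.mem_powerset.mpr (Finset.subset_univ _), ?_, by rw [hcoeF]; exact ht⟩
    intro α hα
    rw [← Finset.mem_coe, hcoeF] at *
    exact hsub (by exact_mod_cast hKM hα)
  have hMF : M ⊆ F := by
    intro α hα
    rw [← Finset.mem_coe, hcoeF]
    exact hsub hα
  have := hMmax F hFT
  have hMFeq : M = F := Finset.eq_of_subset_of_card_le hMF this
  rw [hMFeq, hcoeF]

lemma exists_adj_of_mem_support {V : Type*} {G : SimpleGraph V} {x y u : V}
    (w : G.Walk x y) (hnn : ¬ w.Nil) (hu : u ∈ w.support) : ∃ z, G.Adj u z := by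
  induction w with
  | nil => exact absurd SimpleGraph.Walk.Nil.nil hnn
  | @cons x c y h q ihq =>
    rw [SimpleGraph.Walk.support_cons] at hu
    rcases List.mem_cons.mp hu with rfl | hu
    · exact ⟨c, h⟩
    · by_cases hq : q.Nil
      · rw [SimpleGraph.Walk.nil_iff_support_eq] at hq
        rw [hq, List.mem_singleton] at hu
        subst hu
        exact ⟨x, h.symm⟩
      · exact ihq hq hu

/-! ### Measure part -/

section Measure

variable {A : Type*} [Fintype A] [DecidableEq A]
  (Ω : A → Type*) [∀ α, MeasurableSpace (Ω α)]

/-- Restriction between finsets. -/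
def res (I J : Finset A) (h : J ⊆ I) (f : ∀ α : I, Ω α) (β : J) : Ω β := f ⟨β.1, h β.2⟩

/-- Restriction from the full product. -/
def resA (I : Finset A) (f : ∀ α, Ω α) (β : I) : Ω β := f β.1

lemma measurable_res {I J : Finset A} (h : J ⊆ I) : Measurable (res Ω I J h) :=
  measurable_pi_lambda _ fun _ => measurable_pi_apply _

lemma measurable_resA (I : Finset A) : Measurable (resA Ω I) :=
  measurable_pi_lambda _ fun _ => measurable_pi_apply _

lemma map_res_res {I J K : Finset A} (μ : Measure (∀ α : I, Ω α)) (h1 : J ⊆ I) (h2 : K ⊆ J) :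
    (μ.map (res Ω I J h1)).map (res Ω J K h2) = μ.map (res Ω I K (h2.trans h1)) := by
  rw [Measure.map_map (measurable_res Ω h2) (measurable_res Ω h1)]; rfl

lemma map_resA_res {I J : Finset A} (μ : Measure (∀ α, Ω α)) (h : J ⊆ I) :
    (μ.map (resA Ω I)).map (res Ω I J h) = μ.map (resA Ω J) := by
  rw [Measure.map_map (measurable_res Ω h) (measurable_resA Ω I)]; rfl

end Measure

lemma prob_measure_subsingleton {X : Type*} [MeasurableSpace X] [Subsingleton X] [Nonempty X]
    (μ ν : Measure X) [IsProbabilityMeasure μ] [IsProbabilityMeasure ν] : μ = ν := by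
  ext s hs
  rcases s.eq_empty_or_nonempty with rfl | ⟨y, hy⟩
  · simp
  · have : s = Set.univ := Set.eq_univ_of_forall fun z => (Subsingleton.elim y z ▸ hy)
    rw [this]
    simp

lemma map_prodMap_compProd {X Y Z : Type*} [MeasurableSpace X] [MeasurableSpace Y]
    [MeasurableSpace Z] (μ : Measure X) [IsProbabilityMeasure μ] {g : X → Y} (hg : Measurable g)
    (κ : Kernel Y Z) [IsMarkovKernel κ] :
    (μ ⊗ₘ (κ.comap g hg)).map (Prod.map g id) = (μ.map g) ⊗ₘ κ := by
  haveI : IsProbabilityMeasure (μ.map g) := Measure.isProbabilityMeasure_map hg.aemeasurable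
  ext s hs
  rw [Measure.map_apply (hg.prodMap measurable_id) hs,
    Measure.compProd_apply (hs.preimage (hg.prodMap measurable_id)),
    Measure.compProd_apply hs,
    lintegral_map (Kernel.measurable_kernel_prodMk_left hs) hg]
  apply lintegral_congr
  intro x
  rw [Kernel.comap_apply]
  rfl

end ChordalAux

namespace ChordalAux
open SimpleGraph MeasureTheory ProbabilityTheory

section Split

variable {A : Type*} [DecidableEq A] (Ω : A → Type*) [∀ α, MeasurableSpace (Ω α)]
  (I : Finset A) (v : A) (hv : v ∈ I)

/-- Split a function on `I` into its restriction to `I.erase v` and its value at `v`. -/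
def splitF (g : ∀ α : I, Ω α) : (∀ α : I.erase v, Ω α) × Ω v :=
  (fun α => g ⟨α.1, Finset.erase_subset _ _ α.2⟩, g ⟨v, hv⟩)

/-- Inverse of `splitF`. -/
def unsplitF (q : (∀ α : I.erase v, Ω α) × Ω v) (α : I) : Ω α :=
  if h : α.1 = v then cast (congrArg Ω h.symm) q.2
  else q.1 ⟨α.1, Finset.mem_erase.mpr ⟨h, α.2⟩⟩

lemma unsplit_split (g : ∀ α : I, Ω α) : unsplitF Ω I v (splitF Ω I v hv g) = g := by
  funext α
  obtain ⟨a, ha⟩ := α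
  by_cases h : a = v
  · subst h
    show dite _ _ _ = _
    rw [dif_pos rfl]
    rfl
  · show dite _ _ _ = _
    rw [dif_neg h]
    rfl

lemma measurable_splitF : Measurable (splitF Ω I v hv) := by
  refine Measurable.prod ?_ ?_
  · exact measurable_pi_lambda _ fun _ => measurable_pi_apply _
  · exact measurable_pi_apply _

lemma measurable_unsplitF : Measurable (unsplitF Ω I v) := by
  apply measurable_pi_lambda
  rintro ⟨a, ha⟩
  by_cases h : a = v
  · subst h
    have heq : (fun q : (∀ α : I.erase a, Ω α) × Ω a =>
        unsplitF Ω I a q ⟨a, ha⟩) = fun q => q.2 := by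
      funext q
      show dite _ _ _ = _
      rw [dif_pos rfl]
      rfl
    rw [heq]
    exact measurable_snd
  · have heq : (fun q : (∀ α : I.erase v, Ω α) × Ω v =>
        unsplitF Ω I v q ⟨a, ha⟩) =
        fun q => q.1 ⟨a, Finset.mem_erase.mpr ⟨h, ha⟩⟩ := by
      funext q
      show dite _ _ _ = _
      rw [dif_neg h]
    rw [heq]
    exact (measurable_pi_apply _).comp measurable_fst

lemma measurable_updateAt :
    Measurable (fun q : (∀ α, Ω α) × Ω v => Function.update q.1 v q.2) := by
  apply measurable_pi_lambda
  intro a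
  by_cases h : a = v
  · subst h
    simp only [Function.update_self]
    exact measurable_snd
  · simp only [Function.update_of_ne h]
    exact (measurable_pi_apply a).comp measurable_fst

end Split

end ChordalAux

namespace ChordalAux
open SimpleGraph MeasureTheory ProbabilityTheory

variable {A : Type*} [Fintype A] [DecidableEq A]
  (Ω : A → Type*) [∀ α, MeasurableSpace (Ω α)] [∀ α, StandardBorelSpace (Ω α)]
  [∀ α, Nonempty (Ω α)]

theorem main (n : ℕ) : ∀ (ℐ : Finset (Finset A)), (ℐ.sup id).card ≤ n →
    (depGraph ℐ).IsChordal →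
    (∀ I ∈ ℐ, (depGraph ℐ).IsMaximalClique ↑I ∧ I.Nonempty) →
    (∀ K : Finset A, (depGraph ℐ).IsMaximalClique ↑K → K.Nonempty → K ⊆ ℐ.sup id → K ∈ ℐ) →
    ∀ p : (∀ I : Finset A, Measure (∀ α : I, Ω α)),
    (∀ I ∈ ℐ, IsProbabilityMeasure (p I)) →
    (∀ I ∈ ℐ, ∀ J ∈ ℐ,
      (p I).map (res Ω I (I ∩ J) Finset.inter_subset_left) =
      (p J).map (res Ω J (I ∩ J) Finset.inter_subset_right)) →
    ∃ μ : Measure (∀ α, Ω α), IsProbabilityMeasure μ ∧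
      ∀ I ∈ ℐ, μ.map (resA Ω I) = p I := by
  induction n using Nat.strong_induction_on with
  | _ n IH =>
  intro ℐ hcard hch hcl hrev p hprob hcompat
  classical
  by_cases hE : ℐ = ∅
  · subst hE
    refine ⟨Measure.pi fun α => Measure.dirac (Classical.arbitrary (Ω α)), inferInstance, ?_⟩
    intro I hI
    simp at hI
  -- basic setup
  set G := depGraph ℐ with hGdef
  set U := ℐ.sup id with hUdef
  have hmemU : ∀ α, α ∈ U ↔ ∃ I ∈ ℐ, α ∈ I := by
    intro α; simp [hUdef, Finset.mem_sup]
  have hIU : ∀ I ∈ ℐ, I ⊆ U := fun I hI => Finset.le_sup (f := id) hI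
  have hUne : U.Nonempty := by
    obtain ⟨I₁, hI₁⟩ := Finset.nonempty_iff_ne_empty.mpr hE
    obtain ⟨α, hα⟩ := (hcl I₁ hI₁).2
    exact ⟨α, hIU I₁ hI₁ hα⟩
  have hadjU : ∀ {α β}, G.Adj α β → α ∈ U ∧ β ∈ U := by
    rintro α β ⟨hne, I, hI, h1, h2⟩
    exact ⟨(hmemU α).mpr ⟨I, hI, h1⟩, (hmemU β).mpr ⟨I, hI, h2⟩⟩
  -- simplicial vertex
  obtain ⟨v, hvU, hvsimp⟩ : ∃ v ∈ U, ∀ x ∈ U, ∀ y ∈ U,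
      G.Adj v x → G.Adj v y → x ≠ y → G.Adj x y := by
    rcases exists_simplicial G hch U hUne with hcomp | ⟨v, hv, w, hw, hne, hnadj, hs1, hs2⟩
    · obtain ⟨v, hv⟩ := hUne
      exact ⟨v, hv, fun x hx y hy _ _ hxy => hcomp x hx y hy hxy⟩
    · exact ⟨v, hv, hs1.2⟩
  -- the unique maximal clique containing v
  set N := U.filter (G.Adj v) with hNdef
  set I₀ := insert v N with hI₀def
  have hmemI₀ : ∀ z, z ∈ I₀ ↔ z = v ∨ G.Adj v z := by
    intro z
    simp only [hI₀def, Finset.mem_insert, hNdef, Finset.mem_filter]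
    constructor
    · rintro (rfl | ⟨-, h⟩); exacts [Or.inl rfl, Or.inr h]
    · rintro (rfl | h); exacts [Or.inl rfl, Or.inr ⟨(hadjU h).2, h⟩]
  have hvI₀ : v ∈ I₀ := Finset.mem_insert_self _ _
  have hI₀clique : G.IsClique ↑I₀ := by
    intro x hx y hy hxy
    rw [Finset.mem_coe, hmemI₀] at hx hy
    rcases hx with rfl | hx
    · rcases hy with rfl | hy
      · exact absurd rfl hxy
      · exact hy
    · rcases hy with rfl | hy
      · exact hx.symm
      · exact hvsimp x (hadjU hx).2 y (hadjU hy).2 hx hy hxy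
  have hI₀max : G.IsMaximalClique ↑I₀ := by
    refine ⟨hI₀clique, fun t ht hsub => ?_⟩
    refine Set.Subset.antisymm hsub ?_
    intro z hz
    rw [Finset.mem_coe, hmemI₀]
    by_cases hzv : z = v
    · exact Or.inl hzv
    · exact Or.inr (ht (hsub (by exact_mod_cast hvI₀)) hz (Ne.symm hzv))
  have hI₀U : I₀ ⊆ U := by
    intro z hz
    rw [hmemI₀] at hz
    rcases hz with rfl | hz
    · exact hvU
    · exact (hadjU hz).2
  have hI₀ℐ : I₀ ∈ ℐ := hrev I₀ hI₀max ⟨v, hvI₀⟩ hI₀U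
  have huniq : ∀ I ∈ ℐ, v ∈ I → I = I₀ := by
    intro I hI hvI
    have h1 : (I : Set A) = ↑I₀ := by
      refine (hcl I hI).1.2 ↑I₀ hI₀clique ?_
      intro z hz
      rw [Finset.mem_coe] at hz
      rw [Finset.mem_coe, hmemI₀]
      by_cases hzv : z = v
      · exact Or.inl hzv
      · exact Or.inr ((hcl I hI).1.1 (Finset.mem_coe.mpr hvI) (Finset.mem_coe.mpr hz)
          (Ne.symm hzv))
    exact Finset.coe_injective h1
  set I₀' := I₀.erase v with hI₀'def
  have hI₀'sub : I₀' ⊆ I₀ := Finset.erase_subset _ _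
  have hvI₀' : v ∉ I₀' := Finset.notMem_erase _ _
  have hI₀'ℐ : I₀' ∉ ℐ := by
    intro h
    have h1 := (hcl I₀' h).1.2 ↑I₀ hI₀clique (Finset.coe_subset.mpr hI₀'sub)
    have : v ∈ I₀' := by
      rw [← Finset.mem_coe, h1]
      exact_mod_cast hvI₀
    exact hvI₀' this
  -- the new family
  set ℐ' := if I₀'.Nonempty ∧ ¬ ∃ J ∈ ℐ.erase I₀, I₀' ⊆ J then insert I₀' (ℐ.erase I₀)
    else ℐ.erase I₀ with hℐ'def
  have heraseℐ' : ℐ.erase I₀ ⊆ ℐ' := by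
    rw [hℐ'def]; split
    · exact Finset.subset_insert _ _
    · exact Finset.Subset.refl _
  have hsplitℐ' : ∀ J ∈ ℐ', J ∈ ℐ.erase I₀ ∨
      (J = I₀' ∧ I₀'.Nonempty ∧ ¬ ∃ J ∈ ℐ.erase I₀, I₀' ⊆ J) := by
    intro J hJ
    rw [hℐ'def] at hJ
    split at hJ
    · rename_i hcond
      rcases Finset.mem_insert.mp hJ with rfl | h
      exacts [Or.inr ⟨rfl, hcond⟩, Or.inl h]
    · exact Or.inl hJ
  have hmemℐ' : ∀ J ∈ ℐ', J ∈ ℐ.erase I₀ ∨ J = I₀' := by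
    intro J hJ
    rcases hsplitℐ' J hJ with h | ⟨h, -⟩
    exacts [Or.inl h, Or.inr h]
  have hvnot : ∀ J ∈ ℐ', v ∉ J := by
    intro J hJ hvJ
    rcases hmemℐ' J hJ with h | rfl
    · exact (Finset.ne_of_mem_erase h) (huniq J (Finset.mem_of_mem_erase h) hvJ)
    · exact hvI₀' hvJ
  have hJU : ∀ J ∈ ℐ', J ⊆ U := by
    intro J hJ
    rcases hmemℐ' J hJ with h | rfl
    · exact hIU J (Finset.mem_of_mem_erase h)
    · exact hI₀'sub.trans hI₀U
  have hI₀'T : I₀'.Nonempty → ∃ T ∈ ℐ', I₀' ⊆ T := by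
    intro h0
    rw [hℐ'def]
    split
    · exact ⟨I₀', Finset.mem_insert_self _ _, Finset.Subset.refl _⟩
    · rename_i hcond
      rw [not_and, not_not] at hcond
      exact hcond h0
  have hG'le : ∀ {α β}, (depGraph ℐ').Adj α β → G.Adj α β ∧ α ≠ v ∧ β ≠ v := by
    rintro α β ⟨hne, J, hJ, h1, h2⟩
    have hαv : α ≠ v := fun h => hvnot J hJ (h ▸ h1)
    have hβv : β ≠ v := fun h => hvnot J hJ (h ▸ h2)
    refine ⟨⟨hne, ?_⟩, hαv, hβv⟩
    rcases hmemℐ' J hJ with h | rfl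
    · exact ⟨J, Finset.mem_of_mem_erase h, h1, h2⟩
    · exact ⟨I₀, hI₀ℐ, hI₀'sub h1, hI₀'sub h2⟩
  have hG'ge : ∀ {α β}, G.Adj α β → α ≠ v → β ≠ v → (depGraph ℐ').Adj α β := by
    rintro α β ⟨hne, I, hI, h1, h2⟩ hαv hβv
    by_cases hII₀ : I = I₀
    · subst hII₀
      have h1' : α ∈ I₀' := Finset.mem_erase.mpr ⟨hαv, h1⟩
      have h2' : β ∈ I₀' := Finset.mem_erase.mpr ⟨hβv, h2⟩
      obtain ⟨T, hT, hsub⟩ := hI₀'T ⟨α, h1'⟩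
      exact ⟨hne, T, hT, hsub h1', hsub h2'⟩
    · exact ⟨hne, I, heraseℐ' (Finset.mem_erase.mpr ⟨hII₀, hI⟩), h1, h2⟩
  -- chordality of the new dependency graph
  have hch' : (depGraph ℐ').IsChordal := by
    intro w c hcyc hlen
    have hle : ∀ e ∈ c.edges, e ∈ G.edgeSet := by
      intro e he
      induction e with
      | h a b => exact (hG'le (c.adj_of_mem_edges he)).1
    have hcyc' : (c.transfer G hle).IsCycle := hcyc.transfer hle
    have hlen' : 4 ≤ (c.transfer G hle).length := by
      rw [SimpleGraph.Walk.length_transfer]; exact hlen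
    obtain ⟨u₁, u₂, h1, h2, hadj, hne⟩ := hch w (c.transfer G hle) hcyc' hlen'
    rw [SimpleGraph.Walk.support_transfer] at h1 h2
    rw [SimpleGraph.Walk.edges_transfer] at hne
    have hcnn : ¬ c.Nil := by
      intro h
      exact hcyc.ne_nil h.eq_nil
    have hvsup : ∀ u ∈ c.support, u ≠ v := by
      intro u hu
      rintro rfl
      obtain ⟨z, hz⟩ := exists_adj_of_mem_support c hcnn hu
      exact (hG'le hz).2.1 rfl
    exact ⟨u₁, u₂, h1, h2, hG'ge hadj (hvsup _ h1) (hvsup _ h2), hne⟩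
  -- maximal-clique properties of the new family
  have hclique' : ∀ J ∈ ℐ', (depGraph ℐ').IsClique ↑J := by
    intro J hJ x hx y hy hxy
    exact ⟨hxy, J, hJ, Finset.mem_coe.mp hx, Finset.mem_coe.mp hy⟩
  have hne' : ∀ J ∈ ℐ', J.Nonempty := by
    intro J hJ
    rcases hsplitℐ' J hJ with h | ⟨rfl, h0, -⟩
    · exact (hcl J (Finset.mem_of_mem_erase h)).2
    · exact h0
  have hmax' : ∀ J ∈ ℐ', (depGraph ℐ').IsMaximalClique ↑J := by
    intro J hJ
    refine ⟨hclique' J hJ, ?_⟩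
    intro t ht hsub
    rcases hsplitℐ' J hJ with h | ⟨rfl, hne0, hnosup⟩
    · have htG : G.IsClique t := fun x hx y hy hxy => (hG'le (ht hx hy hxy)).1
      exact (hcl J (Finset.mem_of_mem_erase h)).1.2 t htG hsub
    · refine Set.Subset.antisymm hsub ?_
      intro z hz
      by_contra hzI
      obtain ⟨α, hα⟩ := hne0
      have hαt : (α : A) ∈ t := hsub (Finset.mem_coe.mpr hα)
      have hvt : v ∉ t := by
        intro hvt
        have hαv : v ≠ α := fun h => hvI₀' (h ▸ hα)
        exact (hG'le (ht hvt hαt hαv)).2.1 rfl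
      have hzv : z ≠ v := fun h => hvt (h ▸ hz)
      have hαz : (α : A) ≠ z := fun h => hzI (by rw [← h]; exact_mod_cast hα)
      have hKsubt : (↑(insert z I₀') : Set A) ⊆ t := by
        intro x hx
        rw [Finset.coe_insert] at hx
        rcases hx with rfl | hx
        · exact hz
        · exact hsub hx
      have hKcl : G.IsClique ↑(insert z I₀') := by
        intro x hx y hy hxy
        exact (hG'le (ht (hKsubt hx) (hKsubt hy) hxy)).1
      obtain ⟨M, hMmax, hKM⟩ := exists_maximal_superclique G (insert z I₀') hKcl
      have hzM : z ∈ M := hKM (Finset.mem_insert_self _ _)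
      have hαM : (α : A) ∈ M := hKM (Finset.mem_insert_of_mem hα)
      have hMU : M ⊆ U := by
        intro β hβ
        by_cases hβz : β = z
        · subst hβz
          exact (hadjU (hMmax.1 (Finset.mem_coe.mpr hβ) (Finset.mem_coe.mpr hαM)
            (Ne.symm hαz))).1
        · exact (hadjU (hMmax.1 (Finset.mem_coe.mpr hβ) (Finset.mem_coe.mpr hzM) hβz)).1
      have hMℐ : M ∈ ℐ := hrev M hMmax ⟨z, hzM⟩ hMU
      have hMI₀ : M ≠ I₀ := by
        intro h
        exact hzI (Finset.mem_coe.mpr (Finset.mem_erase.mpr ⟨hzv, h ▸ hzM⟩))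
      exact hnosup ⟨M, Finset.mem_erase.mpr ⟨hMI₀, hMℐ⟩,
        fun x hx => hKM (Finset.mem_insert_of_mem hx)⟩
  have hrev' : ∀ K : Finset A, (depGraph ℐ').IsMaximalClique ↑K → K.Nonempty →
      K ⊆ ℐ'.sup id → K ∈ ℐ' := by
    intro K hKmax hKne hKsub
    have hvK : v ∉ K := by
      intro hvK
      obtain ⟨J, hJ, hvJ⟩ := Finset.mem_sup.mp (hKsub hvK)
      exact hvnot J hJ hvJ
    have hKG : G.IsClique ↑K := fun x hx y hy hxy => (hG'le (hKmax.1 hx hy hxy)).1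
    obtain ⟨M, hMmax, hKM⟩ := exists_maximal_superclique G K hKG
    obtain ⟨κ₀, hκ₀⟩ := hKne
    have hκ₀U : κ₀ ∈ U := by
      obtain ⟨J, hJ, h⟩ := Finset.mem_sup.mp (hKsub hκ₀)
      exact hJU J hJ h
    have hMU : M ⊆ U := by
      intro β hβ
      by_cases hβκ : β = κ₀
      · subst hβκ; exact hκ₀U
      · exact (hadjU (hMmax.1 (Finset.mem_coe.mpr hβ) (Finset.mem_coe.mpr (hKM hκ₀))
          hβκ)).1
    have hMℐ : M ∈ ℐ := hrev M hMmax ⟨κ₀, hKM hκ₀⟩ hMU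
    by_cases hvM : v ∈ M
    · have hMI₀ : M = I₀ := huniq M hMℐ hvM
      have hKI₀' : K ⊆ I₀' := fun z hz =>
        Finset.mem_erase.mpr ⟨fun h => hvK (h ▸ hz), hMI₀ ▸ hKM hz⟩
      obtain ⟨T, hT, hsubT⟩ := hI₀'T ⟨κ₀, hKI₀' hκ₀⟩
      have hKT : (K : Set A) = ↑T := hKmax.2 ↑T (hclique' T hT)
        (Finset.coe_subset.mpr (hKI₀'.trans hsubT))
      exact (Finset.coe_injective hKT) ▸ hT
    · have hMerase : M ∈ ℐ.erase I₀ := Finset.mem_erase.mpr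
        ⟨fun h => hvM (h ▸ hvI₀), hMℐ⟩
      have hMℐ' : M ∈ ℐ' := heraseℐ' hMerase
      have hKT : (K : Set A) = ↑M := hKmax.2 ↑M (hclique' M hMℐ')
        (Finset.coe_subset.mpr hKM)
      exact (Finset.coe_injective hKT) ▸ hMℐ'
  -- cardinality decrease
  have hU'sub : ℐ'.sup id ⊆ U.erase v := by
    intro β hβ
    obtain ⟨J, hJ, h⟩ := Finset.mem_sup.mp hβ
    exact Finset.mem_erase.mpr ⟨fun he => hvnot J hJ (he ▸ h), hJU J hJ h⟩
  have hcard' : (ℐ'.sup id).card ≤ n - 1 := by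
    have h1 := Finset.card_le_card hU'sub
    have h2 : (U.erase v).card = U.card - 1 := Finset.card_erase_of_mem hvU
    omega
  have hn1 : n - 1 < n := by
    have := Finset.card_pos.mpr hUne
    omega
  -- new measures
  set p' := Function.update p I₀' ((p I₀).map (res Ω I₀ I₀' hI₀'sub)) with hp'def
  have hp'erase : ∀ J, J ≠ I₀' → p' J = p J := fun J h => Function.update_of_ne h _ _
  have hp'I₀' : p' I₀' = (p I₀).map (res Ω I₀ I₀' hI₀'sub) := Function.update_self _ _ _
  haveI hPI₀ : IsProbabilityMeasure (p I₀) := hprob I₀ hI₀ℐ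
  have hprob' : ∀ J ∈ ℐ', IsProbabilityMeasure (p' J) := by
    intro J hJ
    by_cases h : J = I₀'
    · subst h
      rw [hp'I₀']
      exact Measure.isProbabilityMeasure_map (measurable_res Ω hI₀'sub).aemeasurable
    · rw [hp'erase J h]
      rcases hmemℐ' J hJ with he | rfl
      · exact hprob J (Finset.mem_of_mem_erase he)
      · exact absurd rfl h
  -- transport of compatibility
  have key : ∀ J ∈ ℐ.erase I₀, ∀ (W : Finset A) (hWJ : W ⊆ J) (hWI₀ : W ⊆ I₀),
      (p J).map (res Ω J W hWJ) = (p I₀).map (res Ω I₀ W hWI₀) := by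
    intro J hJe W hWJ hWI₀
    have hJℐ := Finset.mem_of_mem_erase hJe
    have h1 : W ⊆ J ∩ I₀ := Finset.subset_inter hWJ hWI₀
    calc (p J).map (res Ω J W hWJ)
        = ((p J).map (res Ω J (J ∩ I₀) Finset.inter_subset_left)).map
            (res Ω (J ∩ I₀) W h1) := (map_res_res Ω (p J) _ _).symm
      _ = ((p I₀).map (res Ω I₀ (J ∩ I₀) Finset.inter_subset_right)).map
            (res Ω (J ∩ I₀) W h1) := by rw [hcompat J hJℐ I₀ hI₀ℐ]
      _ = (p I₀).map (res Ω I₀ W hWI₀) := map_res_res Ω (p I₀) _ _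
  have hcompat' : ∀ I ∈ ℐ', ∀ J ∈ ℐ',
      (p' I).map (res Ω I (I ∩ J) Finset.inter_subset_left) =
      (p' J).map (res Ω J (I ∩ J) Finset.inter_subset_right) := by
    have hInℐ : ∀ I ∈ ℐ', I ≠ I₀' → I ∈ ℐ.erase I₀ := by
      intro I hI h
      rcases hmemℐ' I hI with he | rfl
      · exact he
      · exact absurd rfl h
    intro I hI J hJ
    by_cases hI2 : I = I₀' <;> by_cases hJ2 : J = I₀'
    · subst hI2; subst hJ2
      rfl
    · subst hI2
      have hJe := hInℐ J hJ hJ2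
      rw [hp'erase J hJ2, hp'I₀', map_res_res Ω (p I₀) hI₀'sub Finset.inter_subset_left]
      exact (key J hJe (I₀' ∩ J) Finset.inter_subset_right
        (Finset.inter_subset_left.trans hI₀'sub)).symm
    · subst hJ2
      have hIe := hInℐ I hI hI2
      rw [hp'erase I hI2, hp'I₀', map_res_res Ω (p I₀) hI₀'sub Finset.inter_subset_right]
      exact key I hIe (I ∩ I₀') Finset.inter_subset_left
        (Finset.inter_subset_right.trans hI₀'sub)
    · rw [hp'erase I hI2, hp'erase J hJ2]
      exact hcompat I (Finset.mem_of_mem_erase (hInℐ I hI hI2)) J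
        (Finset.mem_of_mem_erase (hInℐ J hJ hJ2))
  -- apply the induction hypothesis
  obtain ⟨μ', hμ'prob, hμ'marg⟩ := IH (n - 1) hn1 ℐ' hcard' hch'
    (fun J hJ => ⟨hmax' J hJ, hne' J hJ⟩) hrev' p' hprob' hcompat'
  -- marginal of μ' on I₀'
  have hgmarg : μ'.map (resA Ω I₀') = (p I₀).map (res Ω I₀ I₀' hI₀'sub) := by
    by_cases h0 : I₀'.Nonempty
    · by_cases hsup : ∃ J ∈ ℐ.erase I₀, I₀' ⊆ J
      · obtain ⟨J, hJe, hsubJ⟩ := hsup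
        have hJne : J ≠ I₀' := fun h => hI₀'ℐ (h ▸ Finset.mem_of_mem_erase hJe)
        calc μ'.map (resA Ω I₀')
            = (μ'.map (resA Ω J)).map (res Ω J I₀' hsubJ) := (map_resA_res Ω μ' hsubJ).symm
          _ = (p J).map (res Ω J I₀' hsubJ) := by
              rw [hμ'marg J (heraseℐ' hJe), hp'erase J hJne]
          _ = (p I₀).map (res Ω I₀ I₀' hI₀'sub) := key J hJe I₀' hsubJ hI₀'sub
      · have hI₀'ℐ' : I₀' ∈ ℐ' := by
          rw [hℐ'def, if_pos ⟨h0, hsup⟩]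
          exact Finset.mem_insert_self _ _
        rw [hμ'marg I₀' hI₀'ℐ', hp'I₀']
    · have hemp : I₀' = ∅ := Finset.not_nonempty_iff_eq_empty.mp h0
      haveI : IsEmpty ((I₀' : Finset A) : Type _) :=
        ⟨fun x => absurd (hemp ▸ x.2) (Finset.notMem_empty x.1)⟩
      haveI : IsProbabilityMeasure (μ'.map (resA Ω I₀')) :=
        Measure.isProbabilityMeasure_map (measurable_resA Ω I₀').aemeasurable
      haveI : IsProbabilityMeasure ((p I₀).map (res Ω I₀ I₀' hI₀'sub)) :=
        Measure.isProbabilityMeasure_map (measurable_res Ω hI₀'sub).aemeasurable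
      exact prob_measure_subsingleton _ _
  -- gluing
  haveI : IsProbabilityMeasure μ' := hμ'prob
  set ρ : Measure ((∀ α : I₀', Ω α) × Ω v) := (p I₀).map (splitF Ω I₀ v hvI₀) with hρdef
  have hsplitmeas := measurable_splitF Ω I₀ v hvI₀
  have hunsplitmeas := measurable_unsplitF Ω I₀ v
  haveI : IsProbabilityMeasure ρ := Measure.isProbabilityMeasure_map hsplitmeas.aemeasurable
  set κ := ρ.condKernel with hκdef
  have hgresmeas : Measurable (resA Ω I₀') := measurable_resA Ω I₀'
  set ν := μ' ⊗ₘ (κ.comap (resA Ω I₀') hgresmeas) with hνdef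
  haveI : IsProbabilityMeasure ν := by rw [hνdef]; infer_instance
  set Φ : (∀ α, Ω α) × Ω v → (∀ α, Ω α) := fun q => Function.update q.1 v q.2 with hΦdef
  have hΦmeas : Measurable Φ := measurable_updateAt Ω v
  set μ := ν.map Φ with hμdef
  haveI : IsProbabilityMeasure μ := Measure.isProbabilityMeasure_map hΦmeas.aemeasurable
  have hoff : ∀ (I : Finset A), v ∉ I → μ.map (resA Ω I) = μ'.map (resA Ω I) := by
    intro I hvI
    rw [hμdef, Measure.map_map (measurable_resA Ω I) hΦmeas]
    have hfun : (resA Ω I ∘ Φ) = (resA Ω I) ∘ Prod.fst := by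
      funext q
      funext β
      show Function.update q.1 v q.2 β.1 = q.1 β.1
      exact Function.update_of_ne (fun h => hvI (by rw [← h]; exact β.2)) _ _
    rw [hfun, ← Measure.map_map (measurable_resA Ω I) measurable_fst]
    congr 1
    exact Measure.fst_compProd μ' _
  have hsplitcomp : splitF Ω I₀ v hvI₀ ∘ (resA Ω I₀ ∘ Φ) = Prod.map (resA Ω I₀') id := by
    funext q
    refine Prod.ext ?_ ?_
    · funext β
      show Function.update q.1 v q.2 β.1 = q.1 β.1
      exact Function.update_of_ne (fun h => hvI₀' (by rw [← h]; exact β.2)) _ _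
    · show Function.update q.1 v q.2 v = q.2
      exact Function.update_self _ _ _
  have hfst : ρ.fst = μ'.map (resA Ω I₀') := by
    have h1 : ρ.fst = ρ.map Prod.fst := rfl
    rw [h1, hρdef, Measure.map_map measurable_fst hsplitmeas]
    rw [show (Prod.fst ∘ splitF Ω I₀ v hvI₀ : (∀ α : I₀, Ω α) → _)
      = res Ω I₀ I₀' hI₀'sub from rfl, ← hgmarg]
  have hA : (μ.map (resA Ω I₀)).map (splitF Ω I₀ v hvI₀) = ρ := by
    rw [hμdef, Measure.map_map (measurable_resA Ω I₀) hΦmeas,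
        Measure.map_map hsplitmeas ((measurable_resA Ω I₀).comp hΦmeas)]
    rw [hsplitcomp, hνdef, map_prodMap_compProd μ' hgresmeas κ, ← hfst, hκdef]
    exact ρ.disintegrate ρ.condKernel
  have hfinal : μ.map (resA Ω I₀) = p I₀ := by
    have h1 := congrArg (fun m : Measure ((∀ α : I₀', Ω α) × Ω v) =>
      m.map (unsplitF Ω I₀ v)) hA
    rw [Measure.map_map hunsplitmeas hsplitmeas] at h1
    have hid : (unsplitF Ω I₀ v ∘ splitF Ω I₀ v hvI₀) = id :=
      funext (unsplit_split Ω I₀ v hvI₀)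
    rw [hid, Measure.map_id] at h1
    rw [h1, hρdef, Measure.map_map hunsplitmeas hsplitmeas, hid, Measure.map_id]
  refine ⟨μ, inferInstance, ?_⟩
  intro I hI
  by_cases h : I = I₀
  · subst h; exact hfinal
  · have hIe : I ∈ ℐ.erase I₀ := Finset.mem_erase.mpr ⟨h, hI⟩
    have hvI : v ∉ I := fun hvI => h (huniq I hI hvI)
    rw [hoff I hvI, hμ'marg I (heraseℐ' hIe), hp'erase I (fun he => hI₀'ℐ (he ▸ hI))]

end ChordalAux

/-- Proposition 2: if the dependency graph of the marginal scenario `ℐ` is chordal and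
the elements of `ℐ` are exactly its maximal cliques, then every locally compatible family
of probability measures `(p_I)_{I ∈ ℐ}` on the corresponding products of nonempty
standard Borel spaces admits a global extension. -/
theorem stmt0 {A : Type*} [Fintype A] [DecidableEq A]
    (Ω : A → Type*) [∀ α, MeasurableSpace (Ω α)] [∀ α, StandardBorelSpace (Ω α)]
    [∀ α, Nonempty (Ω α)]
    (ℐ : Finset (Finset A))
    (G : SimpleGraph A)
    (hG : ∀ α β : A, G.Adj α β ↔ α ≠ β ∧ ∃ I ∈ ℐ, α ∈ I ∧ β ∈ I)
    (hchordal : G.IsChordal)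
    (hcliques : ∀ I : Finset A, I ∈ ℐ ↔ G.IsMaximalClique (I : Set A))
    (p : ∀ I : Finset A, Measure (∀ α : I, Ω α))
    (hprob : ∀ I ∈ ℐ, IsProbabilityMeasure (p I))
    (hcompat : ∀ I ∈ ℐ, ∀ J ∈ ℐ,
      (p I).map (fun f (α : (I ∩ J : Finset A)) =>
        f ⟨α.1, Finset.inter_subset_left α.2⟩) =
      (p J).map (fun f (α : (I ∩ J : Finset A)) =>
        f ⟨α.1, Finset.inter_subset_right α.2⟩)) :
    ∃ μ : Measure (∀ α : A, Ω α), IsProbabilityMeasure μ ∧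
      ∀ I ∈ ℐ, μ.map (fun f (α : I) => f α.1) = p I := by
  classical
  have hGeq : G = ChordalAux.depGraph ℐ := by
    ext α β
    rw [hG]
    rfl
  subst hGeq
  obtain hA | hA := isEmpty_or_nonempty A
  ·
    refine ⟨Measure.dirac (show ∀ α : A, Ω α from fun α => hA.elim α), inferInstance, ?_⟩
    intro I hI
    have hIemp : I = ∅ := Finset.eq_empty_of_forall_notMem fun x _ => hA.elim x
    subst hIemp
    haveI : IsEmpty (((∅ : Finset A) : Type _)) := ⟨fun x => (Finset.notMem_empty x.1 x.2)⟩
    haveI := hprob ∅ hI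
    haveI : IsProbabilityMeasure ((Measure.dirac (show ∀ α : A, Ω α from fun α => hA.elim α)).map
        (fun f (α : ((∅ : Finset A) : Type _)) => f α.1)) :=
      Measure.isProbabilityMeasure_map
        (measurable_pi_lambda _ fun _ => measurable_pi_apply _).aemeasurable
    exact ChordalAux.prob_measure_subsingleton _ _
  ·
    have hcl : ∀ I ∈ ℐ, (ChordalAux.depGraph ℐ).IsMaximalClique ↑I ∧ I.Nonempty := by
      intro I hI
      have hmax := (hcliques I).mp hI
      refine ⟨hmax, ?_⟩
      by_contra h
      rw [Finset.not_nonempty_iff_eq_empty] at h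
      subst h
      obtain ⟨α⟩ := hA
      have h1 := hmax.2 {α} (Set.pairwise_singleton α _) (by simp)
      simp only [Finset.coe_empty] at h1
      exact (Set.singleton_nonempty α).ne_empty h1.symm
    have hrev : ∀ K : Finset A, (ChordalAux.depGraph ℐ).IsMaximalClique ↑K → K.Nonempty →
        K ⊆ ℐ.sup id → K ∈ ℐ := fun K hm _ _ => (hcliques K).mpr hm
    obtain ⟨μ, h1, h2⟩ := ChordalAux.main Ω ((ℐ.sup id).card) ℐ le_rfl hchordal hcl hrev
      p hprob hcompat
    exact ⟨μ, h1, fun I hI => h2 I hI⟩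
end

section
/- Let n ≥ 2, let S_1, …, S_n be nonempty finite sets, and for each j ∈ {1, …, n−1} let p_j be a probability distribution on S_j × S_{j+1}. Suppose the family is locally compatible, i.e., for each j ∈ {1, …, n−2} the marginal of p_j on its second coordinate equals the marginal of p_{j+1} on its first coordinate. Then there exists a probability distribution P on S_1 × S_2 × ⋯ × S_n such that for every j ∈ {1, …, n−1} the marginal of P on the coordinates (j, j+1) equals p_j. -/
open Finset

theorem marginal_aux (S : ℕ → Type*)
    [∀ j, Fintype (S j)] [∀ j, Nonempty (S j)] [∀ j, DecidableEq (S j)] :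
    ∀ m : ℕ, ∀ p : ∀ j : ℕ, S j → S (j + 1) → ℝ,
      (∀ j, j + 1 < m + 2 → ∀ a b, 0 ≤ p j a b) →
      (∀ j, j + 1 < m + 2 → ∑ a, ∑ b, p j a b = 1) →
      (∀ j, j + 2 < m + 2 → ∀ b : S (j + 1),
        ∑ a, p j a b = ∑ c, p (j + 1) b c) →
      ∃ P : (∀ i : Fin (m + 2), S i) → ℝ,
        (∀ f, 0 ≤ P f) ∧ (∑ f, P f = 1) ∧
        ∀ j, ∀ h : j + 1 < m + 2, ∀ (a : S j) (b : S (j + 1)),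
          ∑ f ∈ Finset.univ.filter
              (fun f : ∀ i : Fin (m + 2), S i => f ⟨j, by omega⟩ = a ∧ f ⟨j + 1, h⟩ = b), P f
            = p j a b := by
  intro m
  induction m with
  | zero =>
    intro p hpos hsum hcompat
    refine ⟨fun f => p 0 (f ⟨0, by omega⟩) (f ⟨1, by omega⟩), fun f => hpos 0 (by omega) _ _,
      ?_, ?_⟩
    · refine Eq.trans (Fintype.sum_equiv (piFinTwoEquiv (fun i : Fin 2 => S i)) _
        (fun x => p 0 x.1 x.2) (fun f => rfl)) ?_
      rw [Fintype.sum_prod_type]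
      exact hsum 0 (by omega)
    · intro j h a b
      have hj : j = 0 := by omega
      subst hj
      rw [Finset.sum_filter]
      refine Eq.trans (Fintype.sum_equiv (piFinTwoEquiv (fun i : Fin 2 => S i)) _
        (fun x => if x.1 = a ∧ x.2 = b then p 0 x.1 x.2 else 0) (fun f => rfl)) ?_
      rw [Fintype.sum_prod_type]
      simp [ite_and, Finset.sum_ite_eq, Finset.sum_ite_eq']
  | succ m ih =>
    intro p hpos hsum hcompat
    obtain ⟨P, hP0, hP1, hPm⟩ := ih p (fun j hj => hpos j (by omega))
      (fun j hj => hsum j (by omega)) (fun j hj => hcompat j (by omega))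
    classical
    set r : S (m + 1) → ℝ := fun a => ∑ b, p (m + 1) a b with hrdef
    have hr0 : ∀ a, 0 ≤ r a := fun a =>
      Finset.sum_nonneg fun b _ => hpos (m + 1) (by omega) a b
    set q : S (m + 1) → S (m + 2) → ℝ := fun a b =>
      if r a = 0 then (Fintype.card (S (m + 2)) : ℝ)⁻¹ else p (m + 1) a b / r a with hqdef
    have hq0 : ∀ a b, 0 ≤ q a b := by
      intro a b
      by_cases h : r a = 0
      · simp [hqdef, h]
      · simp only [hqdef, h, if_false]
        exact div_nonneg (hpos (m + 1) (by omega) a b) (hr0 a)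
    have hqsum : ∀ a, ∑ b, q a b = 1 := by
      intro a
      by_cases h : r a = 0
      · simp only [hqdef, h, if_true]
        rw [Finset.sum_const, Finset.card_univ, nsmul_eq_mul]
        exact mul_inv_cancel₀ (by exact_mod_cast Fintype.card_ne_zero)
      · simp only [hqdef, h, if_false]
        rw [← Finset.sum_div]
        have hnum : (∑ b : S (m + 2), p (m + 1) a b) = r a := rfl
        rw [hnum, div_self h]
    have hrq : ∀ a b, r a * q a b = p (m + 1) a b := by
      intro a b
      by_cases h : r a = 0
      · have hz : p (m + 1) a b = 0 := by
          have := (Finset.sum_eq_zero_iff_of_nonneg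
            (fun b _ => hpos (m + 1) (by omega) a b)).mp h
          exact this b (Finset.mem_univ b)
        simp [h, hz]
      · simp only [hqdef, h, if_false]
        rw [mul_comm, div_mul_cancel₀ _ h]
    set e := Fin.snocEquiv (fun i : Fin (m + 3) => S i) with hedef
    set P' : (∀ i : Fin (m + 3), S i) → ℝ := fun f =>
      P (fun i : Fin (m + 2) => f i.castSucc) *
        q (f ⟨m + 1, by omega⟩) (f ⟨m + 2, by omega⟩) with hP'def
    have key : ∀ (b : S (m + 2)) (g : ∀ i : Fin (m + 2), S i),
        P' (e (b, g)) = P g * q (g ⟨m + 1, by omega⟩) b := by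
      intro b g
      have h1 : (fun i : Fin (m + 2) => (e (b, g)) i.castSucc) = g :=
        funext fun i => Fin.snoc_castSucc (α := fun i : Fin (m + 3) => S i) (p := g) (x := b) (i := i)
      have h2 : (e (b, g)) ⟨m + 1, by omega⟩ = g ⟨m + 1, by omega⟩ :=
        Fin.snoc_castSucc (α := fun i : Fin (m + 3) => S i) (p := g) (x := b) (i := ⟨m + 1, by omega⟩)
      have h3 : (e (b, g)) ⟨m + 2, by omega⟩ = b :=
        Fin.snoc_last (α := fun i : Fin (m + 3) => S i) (p := g) (x := b)
      simp only [hP'def, h1, h2, h3]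
    -- fiber lemma: one-site marginal of P at the last site equals r
    have fib : ∀ a : S (m + 1),
        (∑ g : ∀ i : Fin (m + 2), S i, if g ⟨m + 1, by omega⟩ = a then P g else 0) = r a := by
      intro a
      have step1 : ∀ g : ∀ i : Fin (m + 2), S i,
          (if g ⟨m + 1, by omega⟩ = a then P g else 0) =
            ∑ c : S m, if g ⟨m, by omega⟩ = c ∧ g ⟨m + 1, by omega⟩ = a then P g else 0 := by
        intro g
        simp [ite_and, Finset.sum_ite_eq]
      calc (∑ g : ∀ i : Fin (m + 2), S i, if g ⟨m + 1, by omega⟩ = a then P g else 0)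
          = ∑ g : ∀ i : Fin (m + 2), S i, ∑ c : S m,
              if g ⟨m, by omega⟩ = c ∧ g ⟨m + 1, by omega⟩ = a then P g else 0 :=
            Finset.sum_congr rfl fun g _ => step1 g
        _ = ∑ c : S m, ∑ g : ∀ i : Fin (m + 2), S i,
              if g ⟨m, by omega⟩ = c ∧ g ⟨m + 1, by omega⟩ = a then P g else 0 :=
            Finset.sum_comm
        _ = ∑ c : S m, p m c a := by
            refine Finset.sum_congr rfl fun c _ => ?_
            rw [← Finset.sum_filter]
            exact hPm m (by omega) c a
        _ = r a := by rw [hcompat m (by omega) a]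
    refine ⟨P', fun f => mul_nonneg (hP0 _) (hq0 _ _), ?_, ?_⟩
    · calc (∑ f, P' f) = ∑ x : S (m + 2) × (∀ i : Fin (m + 2), S i), P' (e x) :=
            (Equiv.sum_comp e P').symm
        _ = ∑ b : S (m + 2), ∑ g : ∀ i : Fin (m + 2), S i,
              P g * q (g ⟨m + 1, by omega⟩) b := by
            rw [Fintype.sum_prod_type]
            exact Finset.sum_congr rfl fun b _ => Finset.sum_congr rfl fun g _ => key b g
        _ = ∑ g : ∀ i : Fin (m + 2), S i, ∑ b : S (m + 2),
              P g * q (g ⟨m + 1, by omega⟩) b := Finset.sum_comm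
        _ = 1 := by
            rw [← hP1]
            refine Finset.sum_congr rfl fun g _ => ?_
            rw [← Finset.mul_sum, hqsum, mul_one]
    · intro j h a b
      rw [Finset.sum_filter]
      rw [← Equiv.sum_comp e (fun f => if f ⟨j, by omega⟩ = a ∧ f ⟨j + 1, h⟩ = b then P' f else 0)]
      rw [Fintype.sum_prod_type]
      by_cases hj : j + 1 < m + 2
      · -- both indices in the initial segment
        have ecast : ∀ (b' : S (m + 2)) (g : ∀ i : Fin (m + 2), S i) (k : ℕ) (hk : k < m + 2),
            (e (b', g)) ⟨k, by omega⟩ = g ⟨k, hk⟩ := fun b' g k hk =>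
          Fin.snoc_castSucc (α := fun i : Fin (m + 3) => S i) (p := g) (x := b') (i := ⟨k, hk⟩)
        calc (∑ b' : S (m + 2), ∑ g : ∀ i : Fin (m + 2), S i,
                if (e (b', g)) ⟨j, by omega⟩ = a ∧ (e (b', g)) ⟨j + 1, h⟩ = b
                  then P' (e (b', g)) else 0)
            = ∑ b' : S (m + 2), ∑ g : ∀ i : Fin (m + 2), S i,
                if g ⟨j, by omega⟩ = a ∧ g ⟨j + 1, hj⟩ = b
                  then P g * q (g ⟨m + 1, by omega⟩) b' else 0 := by
              refine Finset.sum_congr rfl fun b' _ => Finset.sum_congr rfl fun g _ => ?_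
              simp only [ecast b' g j (by omega), ecast b' g (j + 1) hj, key b' g]
          _ = ∑ g : ∀ i : Fin (m + 2), S i, ∑ b' : S (m + 2),
                if g ⟨j, by omega⟩ = a ∧ g ⟨j + 1, hj⟩ = b
                  then P g * q (g ⟨m + 1, by omega⟩) b' else 0 := Finset.sum_comm
          _ = ∑ g : ∀ i : Fin (m + 2), S i,
                if g ⟨j, by omega⟩ = a ∧ g ⟨j + 1, hj⟩ = b then P g else 0 := by
              refine Finset.sum_congr rfl fun g _ => ?_
              by_cases hc : g ⟨j, by omega⟩ = a ∧ g ⟨j + 1, hj⟩ = b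
              · simp only [if_pos hc, ← Finset.mul_sum, hqsum, mul_one]
              · simp only [if_neg hc, Finset.sum_const_zero]
          _ = p j a b := by rw [← Finset.sum_filter]; exact hPm j hj a b
      · -- last pair: j = m + 1
        have hjm : j = m + 1 := by omega
        subst hjm
        have ecast : ∀ (b' : S (m + 2)) (g : ∀ i : Fin (m + 2), S i),
            (e (b', g)) ⟨m + 1, by omega⟩ = g ⟨m + 1, by omega⟩ := fun b' g =>
          Fin.snoc_castSucc (α := fun i : Fin (m + 3) => S i) (p := g) (x := b') (i := ⟨m + 1, by omega⟩)
        have elast : ∀ (b' : S (m + 2)) (g : ∀ i : Fin (m + 2), S i),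
            (e (b', g)) ⟨m + 2, by omega⟩ = b' := fun b' g =>
          Fin.snoc_last (α := fun i : Fin (m + 3) => S i) (p := g) (x := b')
        calc (∑ b' : S (m + 2), ∑ g : ∀ i : Fin (m + 2), S i,
                if (e (b', g)) ⟨m + 1, by omega⟩ = a ∧ (e (b', g)) ⟨m + 1 + 1, h⟩ = b
                  then P' (e (b', g)) else 0)
            = ∑ b' : S (m + 2), ∑ g : ∀ i : Fin (m + 2), S i,
                if g ⟨m + 1, by omega⟩ = a ∧ b' = b
                  then P g * q (g ⟨m + 1, by omega⟩) b' else 0 := by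
              refine Finset.sum_congr rfl fun b' _ => Finset.sum_congr rfl fun g _ => ?_
              simp only [ecast b' g, elast b' g, key b' g]
          _ = ∑ g : ∀ i : Fin (m + 2), S i,
                if g ⟨m + 1, by omega⟩ = a then P g * q a b else 0 := by
              rw [Finset.sum_comm]
              refine Finset.sum_congr rfl fun g _ => ?_
              by_cases hc : g ⟨m + 1, by omega⟩ = a
              · rw [if_pos hc]
                simp only [hc, true_and]
                simp [Finset.sum_ite_eq']
              · rw [if_neg hc]
                refine Finset.sum_eq_zero fun b' _ => ?_
                rw [if_neg (by tauto)]
          _ = (∑ g : ∀ i : Fin (m + 2), S i,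
                if g ⟨m + 1, by omega⟩ = a then P g else 0) * q a b := by
              rw [Finset.sum_mul]
              exact Finset.sum_congr rfl fun g _ => by rw [ite_mul, zero_mul]
          _ = r a * q a b := by rw [fib a]
          _ = p (m + 1) a b := hrq a b

/-- The classical marginal problem for an open chain: locally compatible
nearest-neighbour distributions `p_j` on `S_j × S_{j+1}` always admit a global
distribution `P` on `S_0 × ⋯ × S_{n-1}` with the prescribed two-site marginals. -/
theorem stmt4 {n : ℕ} (hn : 2 ≤ n) (S : ℕ → Type*)
    [∀ j, Fintype (S j)] [∀ j, Nonempty (S j)] [∀ j, DecidableEq (S j)]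
    (p : ∀ j : ℕ, S j → S (j + 1) → ℝ)
    (hpos : ∀ j, j + 1 < n → ∀ a b, 0 ≤ p j a b)
    (hsum : ∀ j, j + 1 < n → ∑ a, ∑ b, p j a b = 1)
    (hcompat : ∀ j, j + 2 < n → ∀ b : S (j + 1),
      ∑ a, p j a b = ∑ c, p (j + 1) b c) :
    ∃ P : (∀ i : Fin n, S i) → ℝ,
      (∀ f, 0 ≤ P f) ∧ (∑ f, P f = 1) ∧
      ∀ j, ∀ h : j + 1 < n, ∀ (a : S j) (b : S (j + 1)),
        ∑ f ∈ Finset.univ.filter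
            (fun f : ∀ i : Fin n, S i => f ⟨j, by omega⟩ = a ∧ f ⟨j + 1, h⟩ = b), P f
          = p j a b := by
  obtain ⟨m, rfl⟩ : ∃ m, n = m + 2 := ⟨n - 2, by omega⟩
  exact marginal_aux S m p hpos hsum hcompat
end

section
/- Let n ≥ 2, let S_1, …, S_n be nonempty finite sets, and for each j ∈ {2, …, n} let p_j be a probability distribution on S_1 × S_j. Suppose all the p_j have the same marginal on the first coordinate, i.e., for all j, k ∈ {2, …, n} and all s ∈ S_1, ∑_{t∈S_j} p_j(s,t) = ∑_{t∈S_k} p_k(s,t). Then there exists a probability distribution P on S_1 × S_2 × ⋯ × S_n such that for every j ∈ {2, …, n} the marginal of P on the coordinates (1, j) equals p_j. -/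
open Finset

lemma sum_prod_pi {n : ℕ} (T : Fin n → Type*) [∀ i, Fintype (T i)] [∀ i, DecidableEq (T i)]
    (g : ∀ i, T i → ℝ) :
    ∑ f : (∀ i, T i), ∏ i, g i (f i) = ∏ i, ∑ x, g i x := by
  classical
  rw [Finset.prod_univ_sum]
  apply Finset.sum_congr
  · simp [Fintype.piFinset_univ]
  · intros; rfl

/-- The classical marginal problem for a star configuration: distributions `p_j` on
`S_0 × S_j` (site `0` is the centre, sites `1,…,n-1` the leaves) sharing the same
marginal on the centre always admit a global distribution `P` with the prescribed
two-site marginals. -/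
theorem stmt5 {n : ℕ} (hn : 2 ≤ n) (S : ℕ → Type*)
    [∀ j, Fintype (S j)] [∀ j, Nonempty (S j)] [∀ j, DecidableEq (S j)]
    (p : ∀ j : ℕ, S 0 → S j → ℝ)
    (hpos : ∀ j, 1 ≤ j → j < n → ∀ a b, 0 ≤ p j a b)
    (hsum : ∀ j, 1 ≤ j → j < n → ∑ a, ∑ b, p j a b = 1)
    (hcompat : ∀ j k, 1 ≤ j → j < n → 1 ≤ k → k < n → ∀ s : S 0,
      ∑ t, p j s t = ∑ t, p k s t) :
    ∃ P : (∀ i : Fin n, S i) → ℝ,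
      (∀ f, 0 ≤ P f) ∧ (∑ f, P f = 1) ∧
      ∀ j, ∀ _ : 1 ≤ j, ∀ h2 : j < n, ∀ (a : S 0) (b : S j),
        ∑ f ∈ Finset.univ.filter
            (fun f : ∀ i : Fin n, S i => f ⟨0, by omega⟩ = a ∧ f ⟨j, h2⟩ = b), P f
          = p j a b := by
  classical
  have h0n : 0 < n := by omega
  set i0 : Fin n := ⟨0, h0n⟩ with hi0
  set μ : S 0 → ℝ := fun s => ∑ t, p 1 s t with hμdef
  have hμ0 : ∀ s, 0 ≤ μ s := fun s => Finset.sum_nonneg fun t _ => hpos 1 le_rfl (by omega) s t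
  have hμsum : ∑ s, μ s = 1 := hsum 1 le_rfl (by omega)
  have hμmarg : ∀ j, 1 ≤ j → j < n → ∀ s, ∑ t, p j s t = μ s :=
    fun j h1 h2 s => hcompat j 1 h1 h2 le_rfl (by omega) s
  set q : ∀ j : ℕ, S 0 → S j → ℝ :=
    fun j a b => if μ a = 0 then ((Fintype.card (S j)) : ℝ)⁻¹ else p j a b / μ a with hqdef
  have hcard : ∀ j : ℕ, (0:ℝ) < (Fintype.card (S j) : ℝ) := by
    intro j; exact_mod_cast Fintype.card_pos
  have hq0 : ∀ j, 1 ≤ j → j < n → ∀ a b, 0 ≤ q j a b := by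
    intro j h1 h2 a b
    simp only [hqdef]
    split
    · positivity
    · exact div_nonneg (hpos j h1 h2 a b) (hμ0 a)
  have hqsum : ∀ j, 1 ≤ j → j < n → ∀ a, ∑ b, q j a b = 1 := by
    intro j h1 h2 a
    by_cases h : μ a = 0
    · simp only [hqdef, if_pos h]
      rw [Finset.sum_const, Finset.card_univ, nsmul_eq_mul]
      have := (hcard j).ne'
      field_simp
    · simp only [hqdef, if_neg h]
      rw [← Finset.sum_div, hμmarg j h1 h2 a, div_self h]
  have hμq : ∀ j, 1 ≤ j → j < n → ∀ a b, μ a * q j a b = p j a b := by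
    intro j h1 h2 a b
    by_cases h : μ a = 0
    · simp only [hqdef, if_pos h]
      rw [h, zero_mul]
      symm
      have := hμmarg j h1 h2 a
      rw [h] at this
      exact (Finset.sum_eq_zero_iff_of_nonneg (fun t _ => hpos j h1 h2 a t)).mp this b
        (Finset.mem_univ b)
    · simp only [hqdef, if_neg h]
      field_simp
  -- fiberwise sums
  have key1 : ∀ a : S 0, ∑ f ∈ univ.filter (fun f : ∀ i : Fin n, S i => f i0 = a),
      (μ (f i0) * ∏ i ∈ univ.erase i0, q i (f i0) (f i)) = μ a := by
    intro a
    set G : ∀ i : Fin n, S i → ℝ := fun i x =>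
      if i = i0 then (if (⟨i, x⟩ : Σ k : Fin n, S k) = ⟨i0, a⟩ then μ a else 0)
      else q i a x with hG
    rw [Finset.sum_filter]
    have step : ∀ f : ∀ i : Fin n, S i,
        (if f i0 = a then μ (f i0) * ∏ i ∈ univ.erase i0, q i (f i0) (f i) else 0)
          = ∏ i, G i (f i) := by
      intro f
      by_cases h : f i0 = a
      · rw [if_pos h, ← Finset.mul_prod_erase univ _ (Finset.mem_univ i0)]
        congr 1
        · simp [hG, h]
        · refine Finset.prod_congr rfl fun i hi => ?_
          have hne : i ≠ i0 := (Finset.mem_erase.mp hi).1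
          simp [hG, hne, h]
      · rw [if_neg h]
        symm
        apply Finset.prod_eq_zero (Finset.mem_univ i0)
        simp [hG, h]
    rw [Finset.sum_congr rfl fun f _ => step f, sum_prod_pi]
    rw [← Finset.mul_prod_erase univ _ (Finset.mem_univ i0)]
    have h1 : ∑ x, G i0 x = μ a := by simp [hG]
    have h2 : ∏ i ∈ univ.erase i0, (∑ x, G i x) = 1 := by
      refine Finset.prod_eq_one fun i hi => ?_
      have hne : i ≠ i0 := (Finset.mem_erase.mp hi).1
      have hpos1 : 1 ≤ (i : ℕ) := by
        rcases Nat.eq_zero_or_pos (i : ℕ) with h | h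
        · exact absurd (Fin.ext h) hne
        · exact h
      simp only [hG, if_neg hne]
      exact hqsum i hpos1 i.isLt a
    rw [h1, h2, mul_one]
  have key2 : ∀ (j : ℕ) (hj1 : 1 ≤ j) (hj2 : j < n) (a : S 0) (b : S j),
      ∑ f ∈ univ.filter (fun f : ∀ i : Fin n, S i => f i0 = a ∧ f ⟨j, hj2⟩ = b),
        (μ (f i0) * ∏ i ∈ univ.erase i0, q i (f i0) (f i)) = p j a b := by
    intro j hj1 hj2 a b
    set j' : Fin n := ⟨j, hj2⟩ with hj'
    have hj'ne : j' ≠ i0 := Fin.ne_of_val_ne (show j ≠ 0 by omega)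
    have hj'mem : j' ∈ univ.erase i0 := Finset.mem_erase.mpr ⟨hj'ne, Finset.mem_univ _⟩
    set G : ∀ i : Fin n, S i → ℝ := fun i x =>
      if i = i0 then (if (⟨i, x⟩ : Σ k : Fin n, S k) = ⟨i0, a⟩ then μ a else 0)
      else if i = j' then (if (⟨i, x⟩ : Σ k : Fin n, S k) = ⟨j', b⟩ then q j a b else 0)
      else q i a x with hG
    rw [Finset.sum_filter]
    have step : ∀ f : ∀ i : Fin n, S i,
        (if f i0 = a ∧ f j' = b then μ (f i0) * ∏ i ∈ univ.erase i0, q i (f i0) (f i) else 0)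
          = ∏ i, G i (f i) := by
      intro f
      by_cases h : f i0 = a ∧ f j' = b
      · obtain ⟨h1, h2⟩ := h
        rw [if_pos ⟨h1, h2⟩, ← Finset.mul_prod_erase univ _ (Finset.mem_univ i0),
          ← Finset.mul_prod_erase _ (fun i : Fin n => G i (f i)) hj'mem,
          ← Finset.mul_prod_erase _ (fun i : Fin n => q i (f i0) (f i)) hj'mem]
        congr 1
        · simp [hG, h1]
        congr 1
        · simp [hG, hj'ne, h1, h2]; rfl
        · refine Finset.prod_congr rfl fun i hi => ?_
          have hne : i ≠ i0 := (Finset.mem_erase.mp (Finset.mem_of_mem_erase hi)).1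
          have hne' : i ≠ j' := (Finset.mem_erase.mp hi).1
          simp [hG, hne, hne', h1]
      · rw [if_neg h]
        rw [not_and_or] at h
        symm
        rcases h with h | h
        · apply Finset.prod_eq_zero (Finset.mem_univ i0)
          simp [hG, h]
        · apply Finset.prod_eq_zero (Finset.mem_univ j')
          simp [hG, hj'ne, h]
    rw [Finset.sum_congr rfl fun f _ => step f, sum_prod_pi]
    rw [← Finset.mul_prod_erase univ _ (Finset.mem_univ i0),
      ← Finset.mul_prod_erase _ _ hj'mem]
    have h1 : ∑ x, G i0 x = μ a := by simp [hG]
    have h2 : ∑ x, G j' x = q j a b := by simp [hG, hj'ne]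
    have h3 : ∏ i ∈ (univ.erase i0).erase j', (∑ x, G i x) = 1 := by
      refine Finset.prod_eq_one fun i hi => ?_
      have hne : i ≠ i0 := (Finset.mem_erase.mp (Finset.mem_of_mem_erase hi)).1
      have hne' : i ≠ j' := (Finset.mem_erase.mp hi).1
      have hpos1 : 1 ≤ (i : ℕ) := by
        rcases Nat.eq_zero_or_pos (i : ℕ) with h | h
        · exact absurd (Fin.ext h) hne
        · exact h
      simp only [hG, if_neg hne, if_neg hne']
      exact hqsum i hpos1 i.isLt a
    rw [h1, h2, h3, mul_one]
    exact hμq j hj1 hj2 a b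
  -- the global distribution
  refine ⟨fun f => μ (f i0) * ∏ i ∈ univ.erase i0, q i (f i0) (f i), ?_, ?_, ?_⟩
  · intro f
    apply mul_nonneg (hμ0 _)
    apply Finset.prod_nonneg
    intro i hi
    have hii : i ≠ i0 := (Finset.mem_erase.mp hi).1
    have h1 : 1 ≤ (i : ℕ) := by
      rcases Nat.eq_zero_or_pos (i : ℕ) with h | h
      · exact absurd (Fin.ext h) hii
      · exact h
    exact hq0 i h1 i.isLt _ _
  · rw [← Finset.sum_fiberwise univ (fun f : ∀ i : Fin n, S i => f i0) _]
    rw [Finset.sum_congr rfl fun a _ => key1 a]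
    exact hμsum
  · intro j hj1 hj2 a b
    exact key2 j hj1 hj2 a b
end

section
/- Let S be a nonempty finite set and let p be a probability distribution on S × S that is exchangeable: p(a,b) = p(b,a) for all a, b ∈ S. Then there exists a probability measure μ on S^ℤ (with the product σ-algebra) that is invariant under the shift (x_n)_{n∈ℤ} ↦ (x_{n+1})_{n∈ℤ} and under the reflection (x_n)_{n∈ℤ} ↦ (x_{−n})_{n∈ℤ}, such that the pushforward of μ under x ↦ (x_0, x_1) equals p. -/
open MeasureTheory

/-- Any exchangeable nearest-neighbour distribution `p` on `S × S` is the marginal on two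
consecutive sites of a probability measure on `S^ℤ` that is invariant both under the
shift and under the reflection of the chain. -/
theorem stmt8 {S : Type*} [Fintype S] [Nonempty S]
    [MeasurableSpace S] [DiscreteMeasurableSpace S]
    (p : S × S → ℝ)
    (hpos : ∀ a b, 0 ≤ p (a, b)) (hsum : ∑ a, ∑ b, p (a, b) = 1)
    (hsym : ∀ a b, p (a, b) = p (b, a)) :
    ∃ μ : Measure (ℤ → S), IsProbabilityMeasure μ ∧
      μ.map (fun x n => x (n + 1)) = μ ∧
      μ.map (fun x n => x (-n)) = μ ∧
      ∀ a b : S, μ.map (fun x => (x 0, x 1)) {(a, b)} = ENNReal.ofReal (p (a, b)) := by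
  have htot : ∑ s : S × S, ENNReal.ofReal (p s) = 1 := by
    rw [← ENNReal.ofReal_sum_of_nonneg (fun s _ => hpos s.1 s.2)]
    rw [Fintype.sum_prod_type]
    simp [hsum]
  set ν : PMF (S × S) := PMF.ofFintype (fun s => ENNReal.ofReal (p s)) htot with hν
  set f : S × S → (ℤ → S) := fun s n => if Even n then s.1 else s.2 with hf
  have hfm : Measurable f := by
    apply measurable_pi_lambda
    intro n
    by_cases h : Even n
    · simpa [hf, h] using measurable_fst
    · simpa [hf, h] using measurable_snd
  have hshift : Measurable (fun x : ℤ → S => fun n => x (n + 1)) :=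
    measurable_pi_lambda _ (fun n => measurable_pi_apply _)
  have hrefl : Measurable (fun x : ℤ → S => fun n => x (-n)) :=
    measurable_pi_lambda _ (fun n => measurable_pi_apply _)
  refine ⟨ν.toMeasure.map f, ?_, ?_, ?_, ?_⟩
  · exact Measure.isProbabilityMeasure_map hfm.aemeasurable
  · rw [Measure.map_map hshift hfm]
    have : (fun x : ℤ → S => fun n => x (n + 1)) ∘ f = f ∘ Prod.swap := by
      funext s
      funext n
      simp only [Function.comp, hf, Prod.swap]
      have : Even (n + 1) ↔ ¬ Even n := Int.even_add_one
      by_cases h : Even n <;> simp [h, this.mpr, this]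
    rw [this, ← Measure.map_map hfm measurable_swap]
    congr 1
    rw [PMF.toMeasure_map Prod.swap ν measurable_swap]
    congr 1
    ext s
    rw [PMF.map_apply]
    rw [tsum_eq_single (Prod.swap s)
      (fun t ht => if_neg (fun h => ht (by rw [h]; simp)))]
    rw [if_pos (by simp)]
    simp only [hν, PMF.ofFintype_apply]
    exact congrArg ENNReal.ofReal (hsym s.2 s.1)
  · rw [Measure.map_map hrefl hfm]
    have : (fun x : ℤ → S => fun n => x (-n)) ∘ f = f := by
      funext s
      funext n
      simp only [Function.comp, hf]
      have : Even (-n) ↔ Even n := even_neg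
      by_cases h : Even n <;> simp [h, this]
    rw [this]
  · intro a b
    rw [Measure.map_map (by exact (measurable_pi_apply 0).prodMk (measurable_pi_apply 1)) hfm]
    have : (fun x : ℤ → S => (x 0, x 1)) ∘ f = id := by
      funext s
      simp [hf, Function.comp]
    rw [this, Measure.map_id]
    rw [PMF.toMeasure_apply_singleton _ _ (measurableSet_singleton _)]
    simp [hν, PMF.ofFintype_apply]
end

section
/- Let S be a nonempty finite set and let p be a probability distribution on the configurations {1,2}×{1,2} → S of a 2×2 plaquette that is invariant under swapping the two rows and invariant under swapping the two columns. Then there exists a probability measure μ on S^(ℤ×ℤ) (with the product σ-algebra) that is invariant under all translations of ℤ², invariant under the horizontal reflection (x,y) ↦ (−x,y), and invariant under the vertical reflection (x,y) ↦ (x,−y), such that the pushforward of μ under restriction to any 2×2 plaquette {(x,y), (x+1,y), (x,y+1), (x+1,y+1)} equals p (after the obvious identification of index sets). -/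
open MeasureTheory
open scoped ENNReal NNReal

/-- The transposition of `Fin 2` (swap of two rows or columns). -/
def flip2 : Fin 2 → Fin 2 := fun i => ⟨1 - i.1, by omega⟩

namespace Stmt9Aux

/-- Parity map `ℤ → Fin 2`. -/
def e (n : ℤ) : Fin 2 := ⟨(n % 2).toNat, by omega⟩

lemma e_add (n m : ℤ) : e (n + m) = e n + e m := by
  apply Fin.ext
  rw [Fin.val_add]
  simp only [e, Fin.val_mk]
  omega

lemma e_neg (n : ℤ) : e (-n) = e n := by
  apply Fin.ext
  simp only [e, Fin.val_mk]
  omega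

lemma e_fin (q : Fin 2) : e (q.1 : ℤ) = q := by
  fin_cases q <;> decide

lemma fin2_cases (g : Fin 2) : g = 0 ∨ g = 1 := by revert g; decide

lemma zero_add' (q : Fin 2) : (0 : Fin 2) + q = q := by revert q; decide

lemma one_add' (q : Fin 2) : (1 : Fin 2) + q = flip2 q := by revert q; decide

lemma gg (g q : Fin 2) : g + (g + q) = q := by revert g q; decide

/-- Invariance of `p` under the shift-by-(g,h) action on plaquette configurations. -/
lemma pG {S : Type*} (p : (Fin 2 × Fin 2 → S) → ℝ)
    (hrow : ∀ c, p (fun q => c (q.1, flip2 q.2)) = p c)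
    (hcol : ∀ c, p (fun q => c (flip2 q.1, q.2)) = p c)
    (g h : Fin 2) (c : Fin 2 × Fin 2 → S) :
    p (fun q => c (g + q.1, h + q.2)) = p c := by
  rcases fin2_cases g with rfl | rfl <;> rcases fin2_cases h with rfl | rfl
  · have : (fun q : Fin 2 × Fin 2 => c (0 + q.1, 0 + q.2)) = c :=
      funext fun q => by rw [zero_add', zero_add']
    rw [this]
  · have : (fun q : Fin 2 × Fin 2 => c (0 + q.1, 1 + q.2))
        = (fun q : Fin 2 × Fin 2 => c (q.1, flip2 q.2)) :=
      funext fun q => by rw [zero_add', one_add']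
    rw [this, hrow]
  · have : (fun q : Fin 2 × Fin 2 => c (1 + q.1, 0 + q.2))
        = (fun q : Fin 2 × Fin 2 => c (flip2 q.1, q.2)) :=
      funext fun q => by rw [one_add', zero_add']
    rw [this, hcol]
  · have : (fun q : Fin 2 × Fin 2 => c (1 + q.1, 1 + q.2))
        = (fun q : Fin 2 × Fin 2 =>
            (fun r : Fin 2 × Fin 2 => c (r.1, flip2 r.2)) (flip2 q.1, q.2)) :=
      funext fun q => by rw [one_add', one_add']
    rw [this]
    exact (hcol fun r => c (r.1, flip2 r.2)).trans (hrow c)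

/-- Pushforward of a finite weighted sum of Dirac measures. -/
lemma map_sum_dirac {X Y : Type*} [MeasurableSpace X] [MeasurableSpace Y] {ι : Type*}
    (s : Finset ι) (w : ι → ℝ≥0∞) (x : ι → X) {f : X → Y} (hf : Measurable f) :
    (∑ i ∈ s, w i • Measure.dirac (x i)).map f
      = ∑ i ∈ s, w i • Measure.dirac (f (x i)) := by
  classical
  induction s using Finset.induction_on with
  | empty => simp
  | insert a s h ih =>
      rw [Finset.sum_insert h, Finset.sum_insert h, Measure.map_add _ _ hf,
        Measure.map_smul, Measure.map_dirac' hf, ih]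

end Stmt9Aux

/-- Any distribution `p` on the configurations of a 2×2 plaquette that is invariant under
swapping the two rows and under swapping the two columns is the plaquette marginal of a
probability measure on `S^(ℤ×ℤ)` invariant under all translations and under the
horizontal and vertical reflections of the square lattice. -/
theorem stmt9 {S : Type*} [Fintype S] [Nonempty S]
    [MeasurableSpace S] [DiscreteMeasurableSpace S]
    (p : (Fin 2 × Fin 2 → S) → ℝ)
    (hpos : ∀ c, 0 ≤ p c) (hsum : ∑ c, p c = 1)
    (hrow : ∀ c, p (fun q => c (q.1, flip2 q.2)) = p c)
    (hcol : ∀ c, p (fun q => c (flip2 q.1, q.2)) = p c) :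
    ∃ μ : Measure (ℤ × ℤ → S), IsProbabilityMeasure μ ∧
      (∀ v : ℤ × ℤ, μ.map (fun x w => x (w + v)) = μ) ∧
      (μ.map (fun x w => x (-w.1, w.2)) = μ) ∧
      (μ.map (fun x w => x (w.1, -w.2)) = μ) ∧
      ∀ (a b : ℤ) (c : Fin 2 × Fin 2 → S),
        μ.map (fun x (q : Fin 2 × Fin 2) => x (a + (q.1.1 : ℤ), b + (q.2.1 : ℤ))) {c}
          = ENNReal.ofReal (p c) := by
  classical
  open Stmt9Aux in
  -- the random field `F c α β`
  set F : (Fin 2 × Fin 2 → S) → Fin 2 → Fin 2 → (ℤ × ℤ → S) :=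
    fun c α β w => c (α + Stmt9Aux.e w.1, β + Stmt9Aux.e w.2) with hF
  set W : (Fin 2 × Fin 2 → S) → ℝ≥0∞ := fun c => ENNReal.ofReal (p c) / 4 with hW
  set μ : Measure (ℤ × ℤ → S) :=
    ∑ t : (Fin 2 × Fin 2 → S) × Fin 2 × Fin 2,
      W t.1 • Measure.dirac (F t.1 t.2.1 t.2.2) with hμ
  have happly : ∀ (s : Set (ℤ × ℤ → S)), μ s
      = ∑ t : (Fin 2 × Fin 2 → S) × Fin 2 × Fin 2,
          W t.1 * Measure.dirac (F t.1 t.2.1 t.2.2) s := by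
    intro s
    rw [hμ, Measure.finset_sum_apply]
    simp [Measure.smul_apply]
  have hprob : IsProbabilityMeasure μ := by
    constructor
    rw [happly]
    simp only [measure_univ, mul_one]
    rw [Fintype.sum_prod_type]
    have h4 : ∀ c : Fin 2 × Fin 2 → S,
        (∑ _ : Fin 2 × Fin 2, W c) = ENNReal.ofReal (p c) := by
      intro c
      rw [Finset.sum_const]
      simp only [Finset.card_univ, Fintype.card_prod, Fintype.card_fin]
      rw [nsmul_eq_mul, hW]
      norm_num
      rw [mul_comm, ENNReal.div_mul_cancel (by norm_num) (by norm_num)]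
    calc (∑ c : Fin 2 × Fin 2 → S, ∑ _ : Fin 2 × Fin 2, W c)
        = ∑ c : Fin 2 × Fin 2 → S, ENNReal.ofReal (p c) := by
          exact Finset.sum_congr rfl fun c _ => h4 c
      _ = ENNReal.ofReal (∑ c, p c) := (ENNReal.ofReal_sum_of_nonneg (fun c _ => hpos c)).symm
      _ = 1 := by rw [hsum]; simp
  refine ⟨μ, hprob, ?_, ?_, ?_, ?_⟩
  · -- translation invariance
    intro v
    have hmeas : Measurable fun (x : ℤ × ℤ → S) w => x (w + v) :=
      measurable_pi_lambda _ fun w => measurable_pi_apply _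
    rw [hμ, Stmt9Aux.map_sum_dirac _ _ _ hmeas]
    have hFt : ∀ (c : Fin 2 × Fin 2 → S) (α β : Fin 2),
        (fun w => F c α β (w + v)) = F c (α + Stmt9Aux.e v.1) (β + Stmt9Aux.e v.2) := by
      intro c α β
      funext w
      show c (α + Stmt9Aux.e (w.1 + v.1), β + Stmt9Aux.e (w.2 + v.2))
          = c (α + Stmt9Aux.e v.1 + Stmt9Aux.e w.1, β + Stmt9Aux.e v.2 + Stmt9Aux.e w.2)
      rw [Stmt9Aux.e_add, Stmt9Aux.e_add]
      rw [add_comm (Stmt9Aux.e w.1), add_comm (Stmt9Aux.e w.2), add_assoc, add_assoc]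
    have := Fintype.sum_equiv
      ((Equiv.refl (Fin 2 × Fin 2 → S)).prodCongr
        ((Equiv.addRight (Stmt9Aux.e v.1)).prodCongr (Equiv.addRight (Stmt9Aux.e v.2))))
      (fun t : (Fin 2 × Fin 2 → S) × Fin 2 × Fin 2 =>
        W t.1 • Measure.dirac (fun w => F t.1 t.2.1 t.2.2 (w + v)))
      (fun t : (Fin 2 × Fin 2 → S) × Fin 2 × Fin 2 =>
        W t.1 • Measure.dirac (F t.1 t.2.1 t.2.2))
      ?_
    · rw [this]
    · intro t
      simp only [Equiv.prodCongr_apply, Equiv.coe_refl, Prod.map, Equiv.coe_addRight, id_eq]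
      rw [hFt]
  · -- horizontal reflection
    have hmeas : Measurable fun (x : ℤ × ℤ → S) (w : ℤ × ℤ) => x (-w.1, w.2) :=
      measurable_pi_lambda _ fun w => measurable_pi_apply _
    rw [hμ, Stmt9Aux.map_sum_dirac _ _ _ hmeas]
    refine Finset.sum_congr rfl fun t _ => ?_
    congr 1
    exact congrArg Measure.dirac (funext fun w => by
      show t.1 (t.2.1 + Stmt9Aux.e (-w.1), t.2.2 + Stmt9Aux.e w.2)
          = t.1 (t.2.1 + Stmt9Aux.e w.1, t.2.2 + Stmt9Aux.e w.2)
      rw [Stmt9Aux.e_neg])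
  · -- vertical reflection
    have hmeas : Measurable fun (x : ℤ × ℤ → S) (w : ℤ × ℤ) => x (w.1, -w.2) :=
      measurable_pi_lambda _ fun w => measurable_pi_apply _
    rw [hμ, Stmt9Aux.map_sum_dirac _ _ _ hmeas]
    refine Finset.sum_congr rfl fun t _ => ?_
    congr 1
    exact congrArg Measure.dirac (funext fun w => by
      show t.1 (t.2.1 + Stmt9Aux.e w.1, t.2.2 + Stmt9Aux.e (-w.2))
          = t.1 (t.2.1 + Stmt9Aux.e w.1, t.2.2 + Stmt9Aux.e w.2)
      rw [Stmt9Aux.e_neg])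
  · -- plaquette marginals
    intro a b c₀
    have hmeas : Measurable fun (x : ℤ × ℤ → S) (q : Fin 2 × Fin 2) =>
        x (a + (q.1.1 : ℤ), b + (q.2.1 : ℤ)) :=
      measurable_pi_lambda _ fun q => measurable_pi_apply _
    rw [hμ, Stmt9Aux.map_sum_dirac _ _ _ hmeas]
    -- identify the restricted configuration
    set G : Fin 2 → Fin 2 → (Fin 2 × Fin 2 → S) → (Fin 2 × Fin 2 → S) :=
      fun g h c q => c (g + q.1, h + q.2) with hG
    have hres : ∀ (c : Fin 2 × Fin 2 → S) (α β : Fin 2),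
        (fun q : Fin 2 × Fin 2 => F c α β (a + (q.1.1 : ℤ), b + (q.2.1 : ℤ)))
          = G (α + Stmt9Aux.e a) (β + Stmt9Aux.e b) c := by
      intro c α β
      funext q
      show c (α + Stmt9Aux.e (a + (q.1.1 : ℤ)), β + Stmt9Aux.e (b + (q.2.1 : ℤ)))
          = c (α + Stmt9Aux.e a + q.1, β + Stmt9Aux.e b + q.2)
      rw [Stmt9Aux.e_add, Stmt9Aux.e_add, Stmt9Aux.e_fin, Stmt9Aux.e_fin, add_assoc, add_assoc]
    have hGG : ∀ (g h : Fin 2) (c : Fin 2 × Fin 2 → S), G g h (G g h c) = c := by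
      intro g h c
      funext q
      show c (g + (g + q.1), h + (h + q.2)) = c q
      rw [Stmt9Aux.gg, Stmt9Aux.gg]
    have hpG : ∀ (g h : Fin 2), p (G g h c₀) = p c₀ := fun g h =>
      Stmt9Aux.pG p hrow hcol g h c₀
    rw [Measure.finset_sum_apply]
    have hterm : ∀ t : (Fin 2 × Fin 2 → S) × Fin 2 × Fin 2,
        (W t.1 • Measure.dirac
          (fun q : Fin 2 × Fin 2 => F t.1 t.2.1 t.2.2 (a + (q.1.1 : ℤ), b + (q.2.1 : ℤ)))) {c₀}
        = W t.1 * (if t.1 = G (t.2.1 + Stmt9Aux.e a) (t.2.2 + Stmt9Aux.e b) c₀ then 1 else 0) := by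
      intro t
      rw [Measure.smul_apply, smul_eq_mul, hres, Measure.dirac_apply]
      congr 1
      by_cases h : G (t.2.1 + Stmt9Aux.e a) (t.2.2 + Stmt9Aux.e b) t.1 = c₀
      · have ht : t.1 = G (t.2.1 + Stmt9Aux.e a) (t.2.2 + Stmt9Aux.e b) c₀ := by
          rw [← h, hGG]
        rw [if_pos ht, h]
        simp
      · have ht : t.1 ≠ G (t.2.1 + Stmt9Aux.e a) (t.2.2 + Stmt9Aux.e b) c₀ := by
          intro hc
          exact h (by rw [hc, hGG])
        rw [if_neg ht, Set.indicator_of_notMem (by simpa using h)]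
    rw [Finset.sum_congr rfl fun t _ => hterm t]
    rw [Fintype.sum_prod_type]
    rw [Finset.sum_comm]
    have hinner : ∀ gh : Fin 2 × Fin 2,
        (∑ c : Fin 2 × Fin 2 → S,
          W c * (if c = G (gh.1 + Stmt9Aux.e a) (gh.2 + Stmt9Aux.e b) c₀ then 1 else 0))
        = ENNReal.ofReal (p c₀) / 4 := by
      intro gh
      rw [Finset.sum_eq_single (G (gh.1 + Stmt9Aux.e a) (gh.2 + Stmt9Aux.e b) c₀)]
      · simp [hW, hpG]
      · intro c _ hc
        simp [hc]
      · intro h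
        exact absurd (Finset.mem_univ _) h
    calc (∑ gh : Fin 2 × Fin 2, ∑ c : Fin 2 × Fin 2 → S,
            W c * (if c = G (gh.1 + Stmt9Aux.e a) (gh.2 + Stmt9Aux.e b) c₀ then 1 else 0))
        = ∑ _ : Fin 2 × Fin 2, ENNReal.ofReal (p c₀) / 4 :=
          Finset.sum_congr rfl fun gh _ => hinner gh
      _ = ENNReal.ofReal (p c₀) := by
          rw [Finset.sum_const]
          simp only [Finset.card_univ, Fintype.card_prod, Fintype.card_fin]
          rw [nsmul_eq_mul]
          norm_num
          rw [mul_comm, ENNReal.div_mul_cancel (by norm_num) (by norm_num)]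
end
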